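/- arXiv:1106.0072 — 12 statements merged into one kernel-verified Lean document; each statement's English description precedes it below -/
import Mathlib

section
/- Let R be a commutative ring with identity such that the co-maximal graph Ω(R) is a split graph, with vertex partition V(Ω(R)) = K ∪ D where K ∩ D = ∅, the induced subgraph on K is complete, and D is an independent set. Then: (1) for every proper ideal I of R, the set I ∩ K has at most one element; (2) for any two distinct maximal ideals m and n of R, every element of m ∩ n ∩ K is zero. -/
universe u

/-- The co-maximal graph `Ω(R)`: vertices are the elements of `R`, with distinct `x`, `y`
adjacent iff `Rx + Ry = R`. -/
def comaximalGraph (R : Type*) [CommRing R] : SimpleGraph R where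
  Adj x y := x ≠ y ∧ Ideal.span {x} ⊔ Ideal.span {y} = ⊤
  symm := ⟨fun _ _ ⟨h1, h2⟩ => ⟨h1.symm, by rwa [sup_comm]⟩⟩
  loopless := ⟨fun _ ⟨h, _⟩ => h rfl⟩

/-- Vertices of `Γ(R)`: the elements of `R \ (U(R) ∪ J(R))`. -/
def GammaVert (R : Type*) [CommRing R] : Type _ :=
  {x : R // ¬IsUnit x ∧ x ∉ (⊥ : Ideal R).jacobson}

/-- The graph `Γ(R)` induced on `R \ (U(R) ∪ J(R))`: distinct vertices `x`, `y` are
adjacent iff `Rx + Ry = R`. -/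
def Gamma (R : Type*) [CommRing R] : SimpleGraph (GammaVert R) where
  Adj a b := a ≠ b ∧ Ideal.span {a.1} ⊔ Ideal.span {b.1} = ⊤
  symm := ⟨fun _ _ ⟨h1, h2⟩ => ⟨h1.symm, by rwa [sup_comm]⟩⟩
  loopless := ⟨fun _ ⟨h, _⟩ => h rfl⟩

/-- Vertices of `Γ_r(R)`: the principal ideals `Rx` for `x ∈ R \ (U(R) ∪ J(R))`. -/
def GammaRVert (R : Type*) [CommRing R] : Type _ :=
  {I : Ideal R // ∃ x : R, ¬IsUnit x ∧ x ∉ (⊥ : Ideal R).jacobson ∧ I = Ideal.span {x}}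

/-- The graph `Γ_r(R)` on `{Rx | x ∈ R \ (U(R) ∪ J(R))}`: distinct vertices `Rx`, `Ry`
are adjacent iff `Rx + Ry = R`. -/
def GammaR (R : Type*) [CommRing R] : SimpleGraph (GammaRVert R) where
  Adj I J := I ≠ J ∧ I.1 ⊔ J.1 = ⊤
  symm := ⟨fun _ _ ⟨h1, h2⟩ => ⟨h1.symm, by rwa [sup_comm]⟩⟩
  loopless := ⟨fun _ ⟨h, _⟩ => h rfl⟩

/-- A simple graph is a split graph if its vertex set is the disjoint union of a set
inducing a complete graph and an independent set. -/
def IsSplitGraph {V : Type*} (G : SimpleGraph V) : Prop :=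
  ∃ K D : Set V, K ∪ D = Set.univ ∧ K ∩ D = ∅ ∧
    (∀ x ∈ K, ∀ y ∈ K, x ≠ y → G.Adj x y) ∧
    (∀ x ∈ D, ∀ y ∈ D, ¬G.Adj x y)

/-- A simple graph is bipartite if its vertex set is the disjoint union of two sets
such that every edge goes between them. -/
def IsBipartiteGraph {V : Type*} (G : SimpleGraph V) : Prop :=
  ∃ A B : Set V, A ∪ B = Set.univ ∧ A ∩ B = ∅ ∧
    ∀ x y, G.Adj x y → (x ∈ A ∧ y ∈ B) ∨ (x ∈ B ∧ y ∈ A)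

/-- A simple graph is complete bipartite if its vertex set is the disjoint union of two
sets such that two vertices are adjacent iff they lie in different parts. -/
def IsCompleteBipartiteGraph {V : Type*} (G : SimpleGraph V) : Prop :=
  ∃ A B : Set V, A ∪ B = Set.univ ∧ A ∩ B = ∅ ∧
    ∀ x y, G.Adj x y ↔ ((x ∈ A ∧ y ∈ B) ∨ (x ∈ B ∧ y ∈ A))
/-- Lemma 2.1 (1),(2): if the co-maximal graph of `R` is split with clique part `K` and
independent part `D`, then every proper ideal meets `K` in at most one element, and for
distinct maximal ideals `m`, `n`, every element of `m ∩ n ∩ K` is zero. -/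
theorem comaximal_split_ideal_meets_clique {R : Type*} [CommRing R] (K D : Set R)
    (hcover : K ∪ D = Set.univ) (hdisj : K ∩ D = ∅)
    (hK : ∀ x ∈ K, ∀ y ∈ K, x ≠ y → (comaximalGraph R).Adj x y)
    (hD : ∀ x ∈ D, ∀ y ∈ D, ¬(comaximalGraph R).Adj x y) :
    (∀ I : Ideal R, I ≠ ⊤ → ∀ x ∈ (I : Set R) ∩ K, ∀ y ∈ (I : Set R) ∩ K, x = y) ∧
    (∀ m n : Ideal R, m.IsMaximal → n.IsMaximal → m ≠ n →
      ∀ x ∈ (m : Set R) ∩ (n : Set R) ∩ K, x = 0) := by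
  have key : ∀ (I : Ideal R), I ≠ ⊤ → ∀ x ∈ (I : Set R) ∩ K, ∀ y ∈ (I : Set R) ∩ K,
      x = y := by
    intro I hI x hx y hy
    by_contra hxy
    have hadj := hK x hx.2 y hy.2 hxy
    have h2 := hadj.2
    have : (⊤ : Ideal R) ≤ I := by
      rw [← h2]
      exact sup_le (Ideal.span_le.2 (Set.singleton_subset_iff.2 hx.1))
        (Ideal.span_le.2 (Set.singleton_subset_iff.2 hy.1))
    exact hI (top_le_iff.mp this)
  refine ⟨key, ?_⟩
  intro m n hm hn hmn x hx
  exfalso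
  have hsup : m ⊔ n = ⊤ := Ideal.IsMaximal.coprime_of_ne hm hn hmn
  have h1 : (1 : R) ∈ m ⊔ n := hsup ▸ Submodule.mem_top
  obtain ⟨a, ha, b, hb, hab⟩ := Submodule.mem_sup.mp h1
  have han : a ∉ n := fun h => hn.ne_top (Ideal.eq_top_of_isUnit_mem n
    (by rw [← hab]; exact n.add_mem h hb) isUnit_one)
  have hbm : b ∉ m := fun h => hm.ne_top (Ideal.eq_top_of_isUnit_mem m
    (by rw [← hab]; exact m.add_mem ha h) isUnit_one)
  have hspan : Ideal.span {a} ⊔ Ideal.span {b} = ⊤ := by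
    rw [Ideal.eq_top_iff_one]
    exact Submodule.mem_sup.mpr ⟨a, Ideal.mem_span_singleton_self a,
      b, Ideal.mem_span_singleton_self b, hab⟩
  have haD : a ∈ D := by
    rcases (Set.eq_univ_iff_forall.mp hcover a : a ∈ K ∪ D) with haK | haD
    · exfalso
      have hax : a ≠ x := fun h => han (h ▸ hx.1.2)
      have hadj := hK a haK x hx.2 hax
      have : (⊤ : Ideal R) ≤ m := by
        rw [← hadj.2]
        exact sup_le (Ideal.span_le.2 (Set.singleton_subset_iff.2 ha))
          (Ideal.span_le.2 (Set.singleton_subset_iff.2 hx.1.1))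
      exact hm.ne_top (top_le_iff.mp this)
    · exact haD
  have hbD : b ∈ D := by
    rcases (Set.eq_univ_iff_forall.mp hcover b : b ∈ K ∪ D) with hbK | hbD
    · exfalso
      have hbx : b ≠ x := fun h => hbm (h ▸ hx.1.1)
      have hadj := hK b hbK x hx.2 hbx
      have : (⊤ : Ideal R) ≤ n := by
        rw [← hadj.2]
        exact sup_le (Ideal.span_le.2 (Set.singleton_subset_iff.2 hb))
          (Ideal.span_le.2 (Set.singleton_subset_iff.2 hx.1.2))
      exact hn.ne_top (top_le_iff.mp this)
    · exact hbD
  have hne : a ≠ b := fun h => han (h ▸ hb)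
  exact hD a haD b hbD ⟨hne, hspan⟩
end

section
/- Let R be a commutative ring with identity that is not a local ring. Then the graph Γ(R) is connected, and the distance between any two vertices of Γ(R) is at most three. -/
universe u

section Aux

variable {R : Type*} [CommRing R]

lemma my_sup_span_eq_top {a x r : R} (h : r * a + x = 1) :
    Ideal.span {a} ⊔ Ideal.span {x} = ⊤ := by
  rw [Ideal.eq_top_iff_one]
  exact Submodule.mem_sup.mpr ⟨r * a, Ideal.mem_span_singleton'.mpr ⟨r, rfl⟩, x,
    Ideal.mem_span_singleton_self x, h⟩

/-- key construction: a neighbor of `a` inside a maximal ideal avoiding `a`. -/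
lemma my_key (a : R) (ha : ¬IsUnit a) {M : Ideal R} (hM : M.IsMaximal) (haM : a ∉ M) :
    ∃ x r : R, x ∈ M ∧ r * a + x = 1 ∧ ¬IsUnit x ∧ x ∉ (⊥ : Ideal R).jacobson := by
  obtain ⟨y, i, hiM, hyi⟩ := hM.exists_inv haM
  refine ⟨i, y, hiM, hyi, ?_, ?_⟩
  · exact fun hu => hM.ne_top (Ideal.eq_top_of_isUnit_mem _ hiM hu)
  · intro hJ
    have h1 : i * (-1) + 1 = y * a := by linear_combination -hyi
    have := (Ideal.mem_jacobson_bot.mp hJ) (-1)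
    rw [h1] at this
    exact ha (isUnit_of_mul_isUnit_right this)

lemma my_common (u v : R) (hu : ¬IsUnit u) {P : Ideal R} (hP : P.IsMaximal)
    (huP : u ∉ P) (hvP : v ∉ P) :
    ∃ x : R, x ∈ P ∧ ¬IsUnit x ∧ x ∉ (⊥ : Ideal R).jacobson ∧
      Ideal.span {u} ⊔ Ideal.span {x} = ⊤ ∧ Ideal.span {v} ⊔ Ideal.span {x} = ⊤ := by
  have huv : u * v ∉ P := fun hmem => by
    rcases hP.isPrime.mem_or_mem hmem with h | h
    · exact huP h
    · exact hvP h
  have huv' : ¬IsUnit (u * v) := fun h => hu (isUnit_of_mul_isUnit_left h)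
  obtain ⟨x, r, hxP, hrx, hxu, hxJ⟩ := my_key (u * v) huv' hP huv
  refine ⟨x, hxP, hxu, hxJ, ?_, ?_⟩
  · exact my_sup_span_eq_top (r := r * v) (by linear_combination hrx)
  · exact my_sup_span_eq_top (r := r * u) (by linear_combination hrx)

lemma my_getM (c : R) (hc : c ∉ (⊥ : Ideal R).jacobson) :
    ∃ M : Ideal R, M.IsMaximal ∧ c ∉ M := by
  rw [Ideal.jacobson, Ideal.mem_sInf] at hc
  push_neg at hc
  obtain ⟨M, ⟨-, hM⟩, hcM⟩ := hc
  exact ⟨M, hM, hcM⟩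

lemma my_walk (a b : GammaVert R) : ∃ w : (Gamma R).Walk a b, w.length ≤ 3 := by
  obtain ⟨hau, haJ⟩ := a.2
  obtain ⟨hbu, hbJ⟩ := b.2
  by_cases hP : ∃ P : Ideal R, P.IsMaximal ∧ a.1 ∉ P ∧ b.1 ∉ P
  · obtain ⟨P, hPmax, haP, hbP⟩ := hP
    obtain ⟨x, hxP, hxu, hxJ, htopa, htopb⟩ := my_common a.1 b.1 hau hPmax haP hbP
    set vx : GammaVert R := ⟨x, hxu, hxJ⟩ with hvx
    have hne1 : a ≠ vx := fun h => haP (by rw [show a.1 = x from congrArg Subtype.val h]; exact hxP)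
    have hne2 : vx ≠ b := fun h => hbP (by rw [show b.1 = x from (congrArg Subtype.val h).symm]; exact hxP)
    have adj1 : (Gamma R).Adj a vx := ⟨hne1, htopa⟩
    have adj2 : (Gamma R).Adj vx b := ⟨hne2, by rwa [sup_comm]⟩
    exact ⟨SimpleGraph.Walk.cons adj1 (SimpleGraph.Walk.cons adj2 SimpleGraph.Walk.nil), by simp⟩
  · push_neg at hP
    obtain ⟨M₁, hM₁, haM₁⟩ := my_getM a.1 haJ
    obtain ⟨M₂, hM₂, hbM₂⟩ := my_getM b.1 hbJ
    have haM₂ : a.1 ∈ M₂ := by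
      by_contra hc
      exact hbM₂ (hP M₂ hM₂ hc)
    obtain ⟨x, r, hxM₁, hrx, hxu, hxJ⟩ := my_key a.1 hau hM₁ haM₁
    have hxM₂ : x ∉ M₂ := fun hmem => hM₂.ne_top ((Ideal.eq_top_iff_one M₂).mpr
      (hrx ▸ M₂.add_mem (M₂.mul_mem_left r haM₂) hmem))
    obtain ⟨y, hyM₂, hyu, hyJ, htopx, htopb⟩ := my_common x b.1 hxu hM₂ hxM₂ hbM₂
    set vx : GammaVert R := ⟨x, hxu, hxJ⟩ with hvx
    set vy : GammaVert R := ⟨y, hyu, hyJ⟩ with hvy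
    have hne1 : a ≠ vx := fun h => haM₁ (by rw [show a.1 = x from congrArg Subtype.val h]; exact hxM₁)
    have hne2 : vx ≠ vy := fun h => hxM₂ (by rw [show x = y from congrArg Subtype.val h]; exact hyM₂)
    have hne3 : vy ≠ b := fun h => hbM₂ (by rw [show b.1 = y from (congrArg Subtype.val h).symm]; exact hyM₂)
    have adj1 : (Gamma R).Adj a vx := ⟨hne1, my_sup_span_eq_top hrx⟩
    have adj2 : (Gamma R).Adj vx vy := ⟨hne2, htopx⟩
    have adj3 : (Gamma R).Adj vy b := ⟨hne3, by rwa [sup_comm]⟩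
    exact ⟨SimpleGraph.Walk.cons adj1 (SimpleGraph.Walk.cons adj2
      (SimpleGraph.Walk.cons adj3 SimpleGraph.Walk.nil)), by simp⟩

end Aux

/-- Theorem 3.1: for a non-local commutative ring `R`, the graph `Γ(R)` is connected
with diameter at most three. -/
theorem gamma_connected_dist_le_three (R : Type*) [CommRing R] [Nontrivial R]
    (h : ¬IsLocalRing R) :
    (Gamma R).Connected ∧ ∀ a b : GammaVert R, (Gamma R).dist a b ≤ 3 := by

  have hwalk := fun a b : GammaVert R => my_walk a b
  have hne : Nonempty (GammaVert R) := by
    obtain ⟨M, hM⟩ := Ideal.exists_maximal R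
    have : ∃ N : Ideal R, N.IsMaximal ∧ N ≠ M := by
      by_contra hc
      push_neg at hc
      exact h (IsLocalRing.of_unique_max_ideal ⟨M, hM, fun I hI => hc I hI⟩)
    obtain ⟨N, hN, hNM⟩ := this
    have hnle : ¬N ≤ M := fun hle => hNM (hN.eq_of_le hM.ne_top hle)
    obtain ⟨e, heN, heM⟩ := SetLike.not_le_iff_exists.mp hnle
    refine ⟨⟨e, fun hu => hN.ne_top (Ideal.eq_top_of_isUnit_mem _ heN hu), fun hJ => heM ?_⟩⟩
    have : (⊥ : Ideal R).jacobson ≤ M := sInf_le ⟨bot_le, hM⟩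
    exact this hJ
  constructor
  · haveI := hne
    exact ⟨fun a b => (hwalk a b).choose.reachable⟩
  · intro a b
    obtain ⟨w, hw⟩ := hwalk a b
    exact le_trans (SimpleGraph.dist_le w) hw
end

section
/- Let R be a commutative ring with identity that is not a local ring, and let G = Γ(R). Then the following are equivalent: (1) G is a bipartite graph; (2) G is a complete bipartite graph; (3) R has exactly two maximal ideals; (4) R/J(R) is isomorphic to K₁ × K₂ for some fields K₁ and K₂. -/
universe u

section Aux
variable {R : Type*} [CommRing R]

lemma combo_sup_top {x y r s : R} (h : r*x + s*y = 1) :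
    Ideal.span {x} ⊔ Ideal.span {y} = ⊤ := by
  rw [Ideal.eq_top_iff_one]
  have hx : x ∈ Ideal.span {x} ⊔ Ideal.span {y} :=
    Ideal.mem_sup_left (Ideal.mem_span_singleton_self x)
  have hy : y ∈ Ideal.span {x} ⊔ Ideal.span {y} :=
    Ideal.mem_sup_right (Ideal.mem_span_singleton_self y)
  exact h ▸ add_mem (Ideal.mul_mem_left _ r hx) (Ideal.mul_mem_left _ s hy)

lemma exists_common_max {x y : R} (h : Ideal.span {x} ⊔ Ideal.span {y} ≠ ⊤) :
    ∃ p : Ideal R, p.IsMaximal ∧ x ∈ p ∧ y ∈ p := by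
  obtain ⟨p, hp, hle⟩ := Ideal.exists_le_maximal _ h
  exact ⟨p, hp, hle (Ideal.mem_sup_left (Ideal.mem_span_singleton_self x)),
    hle (Ideal.mem_sup_right (Ideal.mem_span_singleton_self y))⟩

lemma sup_top_of_no_common_max {x y : R}
    (h : ∀ p : Ideal R, p.IsMaximal → ¬(x ∈ p ∧ y ∈ p)) :
    Ideal.span {x} ⊔ Ideal.span {y} = ⊤ := by
  by_contra hne
  obtain ⟨p, hp, h1, h2⟩ := exists_common_max hne
  exact h p hp ⟨h1, h2⟩

lemma not_unit_of_mem {x : R} {p : Ideal R} (hp : p.IsMaximal) (hx : x ∈ p) : ¬IsUnit x :=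
  fun hu => hp.ne_top (Ideal.eq_top_of_isUnit_mem _ hx hu)

lemma jacobson_le_max {p : Ideal R} (hp : p.IsMaximal) : (⊥ : Ideal R).jacobson ≤ p :=
  sInf_le (show p ∈ {J | ⊥ ≤ J ∧ J.IsMaximal} from ⟨bot_le, hp⟩)

lemma not_mem_jacobson {x : R} {p : Ideal R} (hp : p.IsMaximal) (hx : x ∉ p) :
    x ∉ (⊥ : Ideal R).jacobson := fun hj => hx (jacobson_le_max hp hj)

/-- Core construction in the case `a*b ∈ J`. -/
lemma triangle_core {a b : R} (hab1 : a + b = 1) (habJ : a * b ∈ (⊥ : Ideal R).jacobson)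
    {p₁ p₂ q : Ideal R} (hp₁ : p₁.IsMaximal) (hp₂ : p₂.IsMaximal) (hq : q.IsMaximal)
    (ha₁ : a ∈ p₁) (ha₂ : a ∈ p₂) (hbq : b ∈ q) (hne : p₁ ≠ p₂) :
    ∃ u v w : R,
      (¬IsUnit u ∧ u ∉ (⊥ : Ideal R).jacobson) ∧
      (¬IsUnit v ∧ v ∉ (⊥ : Ideal R).jacobson) ∧
      (¬IsUnit w ∧ w ∉ (⊥ : Ideal R).jacobson) ∧
      u ≠ v ∧ u ≠ w ∧ v ≠ w ∧
      Ideal.span {u} ⊔ Ideal.span {v} = ⊤ ∧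
      Ideal.span {u} ⊔ Ideal.span {w} = ⊤ ∧
      Ideal.span {v} ⊔ Ideal.span {w} = ⊤ := by
  have hsup : p₁ ⊔ p₂ = ⊤ := hp₁.coprime_of_ne hp₂ hne
  have h1 : (1 : R) ∈ p₁ ⊔ p₂ := hsup ▸ Submodule.mem_top
  obtain ⟨x, hx, y, hy, hxy⟩ := Submodule.mem_sup.mp h1
  set u := x * b + a with hu_def
  set v := y * b + a with hv_def
  set w := b with hw_def
  have hb_not : ∀ p : Ideal R, p.IsMaximal → a ∈ p → b ∉ p := by
    intro p hp hap hbp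
    exact hp.ne_top (Ideal.eq_top_of_isUnit_mem _ (hab1 ▸ add_mem hap hbp) isUnit_one)
  have hu_mem_p₁ : u ∈ p₁ := add_mem (Ideal.mul_mem_right b _ hx) ha₁
  have hv_mem_p₂ : v ∈ p₂ := add_mem (Ideal.mul_mem_right b _ hy) ha₂
  have hxy_ne : ∀ p : Ideal R, p.IsMaximal → x ∈ p → y ∈ p → False := by
    intro p hp h1 h2
    exact hp.ne_top (Ideal.eq_top_of_isUnit_mem _ (hxy ▸ add_mem h1 h2) isUnit_one)
  have hu_not_p₂ : u ∉ p₂ := by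
    intro hup
    have hxb : x * b ∈ p₂ := by
      have := Ideal.sub_mem _ hup ha₂
      simpa [hu_def] using this
    rcases hp₂.isPrime.mem_or_mem hxb with hxp | hbp
    · exact hxy_ne p₂ hp₂ hxp hy
    · exact hb_not p₂ hp₂ ha₂ hbp
  have hv_not_p₁ : v ∉ p₁ := by
    intro hvp
    have hyb : y * b ∈ p₁ := by
      have := Ideal.sub_mem _ hvp ha₁
      simpa [hv_def] using this
    rcases hp₁.isPrime.mem_or_mem hyb with hyp | hbp
    · exact hxy_ne p₁ hp₁ hx hyp
    · exact hb_not p₁ hp₁ ha₁ hbp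
  have hw_not_p₁ : w ∉ p₁ := hb_not p₁ hp₁ ha₁
  have hw_not_p₂ : w ∉ p₂ := hb_not p₂ hp₂ ha₂
  have huv : Ideal.span {u} ⊔ Ideal.span {v} = ⊤ := by
    apply sup_top_of_no_common_max
    rintro p hp ⟨hup, hvp⟩
    have habp : a * b ∈ p := jacobson_le_max hp habJ
    rcases hp.isPrime.mem_or_mem habp with hap | hbp
    · have hxb : x * b ∈ p := by
        have := Ideal.sub_mem _ hup hap; simpa [hu_def] using this
      have hyb : y * b ∈ p := by
        have := Ideal.sub_mem _ hvp hap; simpa [hv_def] using this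
      rcases hp.isPrime.mem_or_mem hxb with hxp | hbp
      · rcases hp.isPrime.mem_or_mem hyb with hyp | hbp
        · exact hxy_ne p hp hxp hyp
        · exact hb_not p hp hap hbp
      · exact hb_not p hp hap hbp
    · have hap : a ∈ p := by
        have := Ideal.sub_mem _ hup (Ideal.mul_mem_left _ x hbp)
        simpa [hu_def, hw_def] using this
      exact hb_not p hp hap hbp
  have huw : Ideal.span {u} ⊔ Ideal.span {w} = ⊤ := by
    apply sup_top_of_no_common_max
    rintro p hp ⟨hup, hwp⟩
    have hap : a ∈ p := by
      have := Ideal.sub_mem _ hup (Ideal.mul_mem_left _ x hwp)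
      simpa [hu_def] using this
    exact hb_not p hp hap hwp
  have hvw : Ideal.span {v} ⊔ Ideal.span {w} = ⊤ := by
    apply sup_top_of_no_common_max
    rintro p hp ⟨hvp, hwp⟩
    have hap : a ∈ p := by
      have := Ideal.sub_mem _ hvp (Ideal.mul_mem_left _ y hwp)
      simpa [hv_def] using this
    exact hb_not p hp hap hwp
  exact ⟨u, v, w, ⟨not_unit_of_mem hp₁ hu_mem_p₁, not_mem_jacobson hp₂ hu_not_p₂⟩,
    ⟨not_unit_of_mem hp₂ hv_mem_p₂, not_mem_jacobson hp₁ hv_not_p₁⟩,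
    ⟨not_unit_of_mem hq hbq, not_mem_jacobson hp₁ hw_not_p₁⟩,
    fun h => hu_not_p₂ (h ▸ hv_mem_p₂), fun h => hw_not_p₁ (h ▸ hu_mem_p₁),
    fun h => hw_not_p₂ (h ▸ hv_mem_p₂), huv, huw, hvw⟩

/-- With three distinct maximal ideals, `Γ(R)` contains a triangle. -/
lemma exists_triangle {m₁ m₂ m₃ : Ideal R}
    (h₁ : m₁.IsMaximal) (h₂ : m₂.IsMaximal) (h₃ : m₃.IsMaximal)
    (h12 : m₁ ≠ m₂) (h13 : m₁ ≠ m₃) (h23 : m₂ ≠ m₃) :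
    ∃ u v w : R,
      (¬IsUnit u ∧ u ∉ (⊥ : Ideal R).jacobson) ∧
      (¬IsUnit v ∧ v ∉ (⊥ : Ideal R).jacobson) ∧
      (¬IsUnit w ∧ w ∉ (⊥ : Ideal R).jacobson) ∧
      u ≠ v ∧ u ≠ w ∧ v ≠ w ∧
      Ideal.span {u} ⊔ Ideal.span {v} = ⊤ ∧
      Ideal.span {u} ⊔ Ideal.span {w} = ⊤ ∧
      Ideal.span {v} ⊔ Ideal.span {w} = ⊤ := by
  have hsup : m₁ ⊔ m₂ = ⊤ := h₁.coprime_of_ne h₂ h12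
  have h1 : (1 : R) ∈ m₁ ⊔ m₂ := hsup ▸ Submodule.mem_top
  obtain ⟨a, ha, b, hb, hab⟩ := Submodule.mem_sup.mp h1
  by_cases habJ : a * b ∈ (⊥ : Ideal R).jacobson
  · have habm₃ : a * b ∈ m₃ := jacobson_le_max h₃ habJ
    rcases h₃.isPrime.mem_or_mem habm₃ with ha₃ | hb₃
    · exact triangle_core hab habJ h₁ h₃ h₂ ha ha₃ hb h13
    · exact triangle_core (a := b) (b := a) (by rw [add_comm]; exact hab)
        (by rwa [mul_comm]) h₂ h₃ h₁ hb hb₃ ha h23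
  · rw [Ideal.mem_jacobson_bot] at habJ
    push_neg at habJ
    obtain ⟨t, ht⟩ := habJ
    set c := a * b * t + 1 with hc_def
    have hb_not : ∀ p : Ideal R, p.IsMaximal → a ∈ p → b ∉ p := by
      intro p hp hap hbp
      exact hp.ne_top (Ideal.eq_top_of_isUnit_mem _ (hab ▸ add_mem hap hbp) isUnit_one)
    have ha_not : ∀ p : Ideal R, p.IsMaximal → b ∈ p → a ∉ p :=
      fun p hp hbp hap => hb_not p hp hap hbp
    have hc_not : ∀ p : Ideal R, p.IsMaximal → a ∈ p → c ∉ p := by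
      intro p hp hap hcp
      have : (1 : R) ∈ p := by
        have := Ideal.sub_mem _ hcp (Ideal.mul_mem_right t _ (Ideal.mul_mem_right b _ hap))
        simpa [hc_def] using this
      exact hp.ne_top (Ideal.eq_top_of_isUnit_mem _ this isUnit_one)
    have hane : a ≠ b := by
      intro hEq
      rw [hEq] at hab
      exact not_unit_of_mem h₂ hb (IsUnit.of_mul_eq_one (a := b) 2 (by linear_combination hab))
    have hac : a ≠ c := by
      intro hEq
      have hEq' : a = a * b * t + 1 := hEq.trans hc_def
      exact not_unit_of_mem h₁ ha
        (IsUnit.of_mul_eq_one (a := a) (1 - b * t) (by linear_combination hEq'))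
    have hbc : b ≠ c := by
      intro hEq
      have hEq' : b = a * b * t + 1 := hEq.trans hc_def
      exact not_unit_of_mem h₂ hb
        (IsUnit.of_mul_eq_one (a := b) (1 - a * t) (by linear_combination hEq'))
    exact ⟨a, b, c,
      ⟨not_unit_of_mem h₁ ha, not_mem_jacobson h₂ (ha_not m₂ h₂ hb)⟩,
      ⟨not_unit_of_mem h₂ hb, not_mem_jacobson h₁ (hb_not m₁ h₁ ha)⟩,
      ⟨ht, not_mem_jacobson h₁ (hc_not m₁ h₁ ha)⟩,
      hane, hac, hbc,
      combo_sup_top (r := 1) (s := 1) (by linear_combination hab),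
      combo_sup_top (r := -(b * t)) (s := 1) (by linear_combination hc_def),
      combo_sup_top (r := -(a * t)) (s := 1) (by linear_combination hc_def)⟩

end Aux

section Main
variable {R : Type*} [CommRing R]

lemma not_bipartite_of_three_max {m₁ m₂ m₃ : Ideal R}
    (h₁ : m₁.IsMaximal) (h₂ : m₂.IsMaximal) (h₃ : m₃.IsMaximal)
    (h12 : m₁ ≠ m₂) (h13 : m₁ ≠ m₃) (h23 : m₂ ≠ m₃) :
    ¬IsBipartiteGraph (Gamma R) := by
  rintro ⟨A, B, hU, hI, hadj⟩
  obtain ⟨u, v, w, hu, hv, hw, huv, huw, hvw, suv, suw, svw⟩ :=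
    exists_triangle h₁ h₂ h₃ h12 h13 h23
  have hdisj : ∀ z : GammaVert R, z ∈ A → z ∈ B → False := by
    intro z h1 h2
    have : z ∈ A ∩ B := ⟨h1, h2⟩
    rw [hI] at this
    exact this
  set U : GammaVert R := ⟨u, hu⟩
  set V : GammaVert R := ⟨v, hv⟩
  set W : GammaVert R := ⟨w, hw⟩
  have eUV : (Gamma R).Adj U V := ⟨fun hEq => huv (congrArg Subtype.val hEq), suv⟩
  have eVW : (Gamma R).Adj V W := ⟨fun hEq => hvw (congrArg Subtype.val hEq), svw⟩
  have eUW : (Gamma R).Adj U W := ⟨fun hEq => huw (congrArg Subtype.val hEq), suw⟩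
  rcases hadj U V eUV with ⟨d1, d2⟩ | ⟨d1, d2⟩ <;>
    rcases hadj V W eVW with ⟨d3, d4⟩ | ⟨d3, d4⟩ <;>
    rcases hadj U W eUW with ⟨d5, d6⟩ | ⟨d5, d6⟩ <;>
    first
      | exact hdisj _ d1 d5
      | exact hdisj _ d5 d1
      | exact hdisj _ d2 d3
      | exact hdisj _ d3 d2
      | exact hdisj _ d4 d6
      | exact hdisj _ d6 d4

lemma complete_bipartite_of_two_max {m n : Ideal R}
    (hm : m.IsMaximal) (hn : n.IsMaximal) (hmn : m ≠ n)
    (honly : ∀ p : Ideal R, p.IsMaximal → p = m ∨ p = n) :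
    IsCompleteBipartiteGraph (Gamma R) := by
  have memb : ∀ z : GammaVert R, z.1 ∈ m ∨ z.1 ∈ n := by
    intro z
    obtain ⟨p, hp, hzp⟩ := exists_max_ideal_of_mem_nonunits (mem_nonunits_iff.mpr z.2.1)
    rcases honly p hp with rfl | rfl
    · exact Or.inl hzp
    · exact Or.inr hzp
  have notboth : ∀ z : GammaVert R, z.1 ∈ m → z.1 ∈ n → False := by
    intro z h1 h2
    apply z.2.2
    refine Submodule.mem_sInf.mpr ?_
    rintro J ⟨-, hJ⟩
    rcases honly J hJ with rfl | rfl
    exacts [h1, h2]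
  refine ⟨{x | x.1 ∈ m}, {x | x.1 ∉ m}, ?_, ?_, ?_⟩
  · ext x; simp [em]
  · ext x; simp
  · intro x y
    constructor
    · rintro ⟨hne, hsup⟩
      have nb : ∀ p : Ideal R, p.IsMaximal → x.1 ∈ p → y.1 ∈ p → False := by
        intro p hp h1 h2
        apply hp.ne_top
        rw [← top_le_iff, ← hsup]
        exact sup_le (Ideal.span_le.mpr (Set.singleton_subset_iff.mpr h1))
          (Ideal.span_le.mpr (Set.singleton_subset_iff.mpr h2))
      by_cases hxm : x.1 ∈ m
      · left
        exact ⟨hxm, fun hym => nb m hm hxm hym⟩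
      · right
        refine ⟨hxm, ?_⟩
        have hxn : x.1 ∈ n := (memb x).resolve_left hxm
        rcases memb y with hym | hyn
        · exact hym
        · exact absurd (nb n hn hxn hyn) not_false
    · rintro (⟨hx, hy⟩ | ⟨hx, hy⟩)
      · have hyn : y.1 ∈ n := (memb y).resolve_left hy
        have hxn : x.1 ∉ n := fun h => notboth x hx h
        refine ⟨fun hEq => hy (hEq ▸ hx), sup_top_of_no_common_max ?_⟩
        rintro p hp ⟨h1, h2⟩
        rcases honly p hp with rfl | rfl
        · exact hy h2
        · exact hxn h1
      · have hxn : x.1 ∈ n := (memb x).resolve_left hx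
        have hyn : y.1 ∉ n := fun h => notboth y hy h
        refine ⟨fun hEq => hx (hEq ▸ hy), sup_top_of_no_common_max ?_⟩
        rintro p hp ⟨h1, h2⟩
        rcases honly p hp with rfl | rfl
        · exact hx h1
        · exact hyn h2

end Main

lemma two_max_iff_quot_prod_fields (R : Type u) [CommRing R] [Nontrivial R] :
    (∃ m n : Ideal R, m.IsMaximal ∧ n.IsMaximal ∧ m ≠ n ∧
        ∀ p : Ideal R, p.IsMaximal → p = m ∨ p = n) ↔
      (∃ (K₁ K₂ : Type u) (_ : Field K₁) (_ : Field K₂),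
        Nonempty ((R ⧸ (⊥ : Ideal R).jacobson) ≃+* (K₁ × K₂))) := by
  constructor
  · rintro ⟨m, n, hm, hn, hmn, honly⟩
    have hjac : (⊥ : Ideal R).jacobson = m ⊓ n := by
      apply le_antisymm
      · exact le_inf (jacobson_le_max hm) (jacobson_le_max hn)
      · refine le_sInf ?_
        rintro J ⟨-, hJ⟩
        rcases honly J hJ with rfl | rfl
        exacts [inf_le_left, inf_le_right]
    haveI := hm
    haveI := hn
    refine ⟨R ⧸ m, R ⧸ n, Ideal.Quotient.field m, Ideal.Quotient.field n, ⟨?_⟩⟩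
    exact (Ideal.quotEquivOfEq hjac).trans
      (Ideal.quotientInfEquivQuotientProd m n
        (Ideal.isCoprime_iff_sup_eq.mpr (hm.coprime_of_ne hn hmn)))
  · rintro ⟨K₁, K₂, hK₁, hK₂, ⟨φ⟩⟩
    let f : R →+* K₁ × K₂ := φ.toRingHom.comp (Ideal.Quotient.mk _)
    have hfs : Function.Surjective f := φ.surjective.comp Ideal.Quotient.mk_surjective
    let f₁ := (RingHom.fst K₁ K₂).comp f
    let f₂ := (RingHom.snd K₁ K₂).comp f
    have hs₁ : Function.Surjective f₁ := by
      intro k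
      obtain ⟨r, hr⟩ := hfs (k, 0)
      exact ⟨r, by simp [f₁, hr]⟩
    have hs₂ : Function.Surjective f₂ := by
      intro k
      obtain ⟨r, hr⟩ := hfs (0, k)
      exact ⟨r, by simp [f₂, hr]⟩
    have hm : (RingHom.ker f₁).IsMaximal := RingHom.ker_isMaximal_of_surjective f₁ hs₁
    have hn : (RingHom.ker f₂).IsMaximal := RingHom.ker_isMaximal_of_surjective f₂ hs₂
    -- the kernel of f is the Jacobson radical
    have hkerf : ∀ z : R, f z = 0 → z ∈ (⊥ : Ideal R).jacobson := by
      intro z hz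
      have : Ideal.Quotient.mk ((⊥ : Ideal R).jacobson) z = 0 :=
        φ.injective (by simpa [f] using hz)
      exact Ideal.Quotient.eq_zero_iff_mem.mp this
    have hinf : RingHom.ker f₁ ⊓ RingHom.ker f₂ ≤ (⊥ : Ideal R).jacobson := by
      rintro z ⟨h1, h2⟩
      apply hkerf
      have e1 : (f z).1 = 0 := h1
      have e2 : (f z).2 = 0 := h2
      exact Prod.ext e1 e2
    obtain ⟨r, hr⟩ := hfs (1, 0)
    have hrn : r ∈ RingHom.ker f₂ := by simp [f₂, RingHom.mem_ker, hr]
    have hrm : r ∉ RingHom.ker f₁ := by simp [f₁, RingHom.mem_ker, hr]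
    refine ⟨RingHom.ker f₁, RingHom.ker f₂, hm, hn, ?_, ?_⟩
    · intro hEq
      exact hrm (hEq ▸ hrn)
    · intro p hp
      have hle : RingHom.ker f₁ ⊓ RingHom.ker f₂ ≤ p :=
        le_trans hinf (jacobson_le_max hp)
      by_contra hcon
      push_neg at hcon
      obtain ⟨hpm, hpn⟩ := hcon
      have h1 : ¬RingHom.ker f₁ ≤ p := fun hle1 =>
        hpm ((hm.eq_of_le hp.ne_top hle1).symm)
      have h2 : ¬RingHom.ker f₂ ≤ p := fun hle2 =>
        hpn ((hn.eq_of_le hp.ne_top hle2).symm)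
      obtain ⟨z₁, hz₁, hz₁p⟩ := Set.not_subset.mp h1
      obtain ⟨z₂, hz₂, hz₂p⟩ := Set.not_subset.mp h2
      have : z₁ * z₂ ∈ p := hle ⟨Ideal.mul_mem_right _ _ hz₁, Ideal.mul_mem_left _ _ hz₂⟩
      rcases hp.isPrime.mem_or_mem this with h | h
      · exact hz₁p h
      · exact hz₂p h


/-- Theorem 3.2: for a non-local commutative ring `R`, the graph `Γ(R)` is bipartite iff
it is complete bipartite, iff `R` has exactly two maximal ideals, iff
`R/J(R) ≅ K₁ × K₂` for fields `K₁`, `K₂`. -/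
theorem gamma_bipartite_tfae (R : Type u) [CommRing R] [Nontrivial R]
    (h : ¬IsLocalRing R) :
    (IsBipartiteGraph (Gamma R) ↔ IsCompleteBipartiteGraph (Gamma R)) ∧
    (IsCompleteBipartiteGraph (Gamma R) ↔
      (∃ m n : Ideal R, m.IsMaximal ∧ n.IsMaximal ∧ m ≠ n ∧
        ∀ p : Ideal R, p.IsMaximal → p = m ∨ p = n)) ∧
    ((∃ m n : Ideal R, m.IsMaximal ∧ n.IsMaximal ∧ m ≠ n ∧
        ∀ p : Ideal R, p.IsMaximal → p = m ∨ p = n) ↔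
      (∃ (K₁ K₂ : Type u) (_ : Field K₁) (_ : Field K₂),
        Nonempty ((R ⧸ (⊥ : Ideal R).jacobson) ≃+* (K₁ × K₂)))) := by
  -- two distinct maximal ideals exist
  obtain ⟨m, hm⟩ := Ideal.exists_maximal R
  have hnu : ¬∃! I : Ideal R, I.IsMaximal := fun hx => h (IsLocalRing.of_unique_max_ideal hx)
  have hex2 : ∃ n : Ideal R, n.IsMaximal ∧ n ≠ m := by
    by_contra hc
    push_neg at hc
    exact hnu ⟨m, hm, fun y hy => hc y hy⟩
  obtain ⟨n, hn, hnm⟩ := hex2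
  -- (1) → (3)
  have h13 : IsBipartiteGraph (Gamma R) →
      (∃ m n : Ideal R, m.IsMaximal ∧ n.IsMaximal ∧ m ≠ n ∧
        ∀ p : Ideal R, p.IsMaximal → p = m ∨ p = n) := by
    intro hbip
    by_contra h3
    push_neg at h3
    obtain ⟨p, hp, hpmn⟩ := h3 m n hm hn (Ne.symm hnm)
    exact not_bipartite_of_three_max hm hn hp (Ne.symm hnm) (Ne.symm hpmn.1)
      (Ne.symm hpmn.2) hbip
  -- (3) → (2)
  have h32 : (∃ m n : Ideal R, m.IsMaximal ∧ n.IsMaximal ∧ m ≠ n ∧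
        ∀ p : Ideal R, p.IsMaximal → p = m ∨ p = n) →
      IsCompleteBipartiteGraph (Gamma R) := by
    rintro ⟨m', n', hm', hn', hmn', honly'⟩
    exact complete_bipartite_of_two_max hm' hn' hmn' honly'
  -- (2) → (1)
  have h21 : IsCompleteBipartiteGraph (Gamma R) → IsBipartiteGraph (Gamma R) := by
    rintro ⟨A, B, hU, hI, hiff⟩
    exact ⟨A, B, hU, hI, fun x y hxy => (hiff x y).mp hxy⟩
  exact ⟨⟨fun h1 => h32 (h13 h1), h21⟩, ⟨fun h2 => h13 (h21 h2), h32⟩,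
    two_max_iff_quot_prod_fields R⟩
end

section
/- Let R be a commutative ring with identity that is not a local ring and in which every element is the sum of an idempotent and a unit (i.e., R is a clean ring), and let G = Γ(R). Then the following are equivalent: (1) G is a bipartite graph; (2) G is a complete bipartite graph; (3) R is isomorphic to R₁ × R₂ where each Rᵢ is a local ring. -/
universe u

section Helpers

variable {R : Type*} [CommRing R]

lemma prod_isUnit_iff' {A B : Type*} [CommRing A] [CommRing B] {p : A × B} :
    IsUnit p ↔ IsUnit p.1 ∧ IsUnit p.2 := by
  constructor
  · intro h
    exact ⟨h.map (RingHom.fst A B), h.map (RingHom.snd A B)⟩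
  · rintro ⟨ha, hb⟩
    obtain ⟨a, ha⟩ := ha.exists_right_inv
    obtain ⟨b, hb⟩ := hb.exists_right_inv
    exact IsUnit.of_mul_eq_one (a := p) (a, b) (by
      ext
      · simpa using ha
      · simpa using hb)

lemma idem_eq_one_of_isUnit {e : R} (he : IsIdempotentElem e) (h : IsUnit e) : e = 1 := by
  obtain ⟨a, ha⟩ := h.exists_right_inv
  calc e = e * 1 := by ring
    _ = e * (e * a) := by rw [ha]
    _ = (e * e) * a := by ring
    _ = e * a := by rw [he.eq]
    _ = 1 := ha

lemma idem_eq_zero_of_mem_jacobson {e : R} (he : IsIdempotentElem e)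
    (h : e ∈ (⊥ : Ideal R).jacobson) : e = 0 := by
  rw [Ideal.mem_jacobson_bot] at h
  have hu : IsUnit (1 - e) := by
    have := h (-1)
    have h2 : e * -1 + 1 = 1 - e := by ring
    rwa [h2] at this
  obtain ⟨a, ha⟩ := hu.exists_right_inv
  have h0 : (1 - e) * e = 0 := by
    have := he.eq; linear_combination -this
  calc e = 1 * e := by ring
    _ = ((1 - e) * a) * e := by rw [ha]
    _ = a * ((1 - e) * e) := by ring
    _ = a * 0 := by rw [h0]
    _ = 0 := by ring

lemma vertex_of_idem {e : R} (he : IsIdempotentElem e) (h0 : e ≠ 0) (h1 : e ≠ 1) :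
    ¬IsUnit (1 - e) ∧ (1 - e) ∉ (⊥ : Ideal R).jacobson := by
  have he' : IsIdempotentElem (1 - e) := he.one_sub
  constructor
  · intro hu
    exact h0 (by have := idem_eq_one_of_isUnit he' hu; linear_combination -this)
  · intro hj
    exact h1 (by have := idem_eq_zero_of_mem_jacobson he' hj; linear_combination -this)

lemma local_of_clean_trivIdem [Nontrivial R]
    (hclean : ∀ r : R, ∃ e v : R, IsIdempotentElem e ∧ IsUnit v ∧ r = e + v)
    (hidem : ∀ e : R, IsIdempotentElem e → e = 0 ∨ e = 1) : IsLocalRing R := by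
  apply IsLocalRing.of_isUnit_or_isUnit_one_sub_self
  intro a
  obtain ⟨e, v, he, hv, hav⟩ := hclean a
  rcases hidem e he with h0 | h1
  · left; rw [hav, h0, zero_add]; exact hv
  · right
    have : 1 - a = -v := by rw [hav, h1]; ring
    rw [this]; exact hv.neg

lemma no_triangle_of_bipartite {V : Type*} {G : SimpleGraph V} (hB : IsBipartiteGraph G)
    {a b c : V} (hab : G.Adj a b) (hac : G.Adj a c) (hbc : G.Adj b c) : False := by
  obtain ⟨A, B, -, hAB, hadj⟩ := hB
  have dis : ∀ x, x ∈ A → x ∈ B → False := fun x h1 h2 => by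
    have : x ∈ A ∩ B := ⟨h1, h2⟩
    rw [hAB] at this; exact this
  rcases hadj a b hab with ⟨haA, hbB⟩ | ⟨haB, hbA⟩
  · rcases hadj a c hac with ⟨-, hcB⟩ | ⟨haB, -⟩
    · rcases hadj b c hbc with ⟨hbA, -⟩ | ⟨-, hcA⟩
      · exact dis b hbA hbB
      · exact dis c hcA hcB
    · exact dis a haA haB
  · rcases hadj a c hac with ⟨haA, -⟩ | ⟨-, hcA⟩
    · exact dis a haA haB
    · rcases hadj b c hbc with ⟨-, hcB⟩ | ⟨hbB, -⟩
      · exact dis c hcA hcB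
      · exact dis b hbA hbB

lemma span_sup_top_iff {x y : R} :
    Ideal.span {x} ⊔ Ideal.span {y} = ⊤ ↔ IsCoprime x y := by
  constructor
  · intro h
    have h1 : (1 : R) ∈ Ideal.span {x} ⊔ Ideal.span {y} := h ▸ Submodule.mem_top
    obtain ⟨i, hi, j, hj, hij⟩ := Submodule.mem_sup.mp h1
    obtain ⟨a, ha⟩ := Ideal.mem_span_singleton'.mp hi
    obtain ⟨b, hb⟩ := Ideal.mem_span_singleton'.mp hj
    exact ⟨a, b, by rw [ha, hb, hij]⟩
  · rintro ⟨a, b, hab⟩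
    rw [Ideal.eq_top_iff_one]
    exact Submodule.mem_sup.mpr ⟨a * x, Ideal.mem_span_singleton'.mpr ⟨a, rfl⟩,
      b * y, Ideal.mem_span_singleton'.mpr ⟨b, rfl⟩, hab⟩

/-- From two orthogonal nontrivial idempotents with nontrivial complement we get a
triangle in `Γ(R)`, contradicting bipartiteness. -/
lemma triangle_of_idems (hB : IsBipartiteGraph (Gamma R))
    {e f : R} (he : IsIdempotentElem e) (hf : IsIdempotentElem f)
    (hef : e * f = 0) (he0 : e ≠ 0) (hf0 : f ≠ 0)
    (hg0 : 1 - e - f ≠ 0) : False := by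
  set g : R := 1 - e - f with hgdef
  have hg : IsIdempotentElem g := by
    show g * g = g
    rw [hgdef]
    linear_combination he.eq + hf.eq + 2 * hef
  have heg : e * g = 0 := by rw [hgdef]; linear_combination -he.eq - hef
  have hfg : f * g = 0 := by rw [hgdef]; linear_combination -hf.eq - hef
  have hg0' : g ≠ 0 := hg0
  -- e ≠ 1 since otherwise f = e * f = 0
  have he1 : e ≠ 1 := fun h => hf0 (by rw [h, one_mul] at hef; exact hef)
  have hf1 : f ≠ 1 := fun h => he0 (by rw [h, mul_one] at hef; exact hef)
  have hg1 : g ≠ 1 := fun h => by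
    -- g = 1 means e + f = 0, so e = -f, then 0 = e*f = -f*f = -f so f = 0
    have hef0 : e = -f := by rw [hgdef] at h; linear_combination -h
    apply hf0
    have hm : (-f) * f = 0 := hef0 ▸ hef
    linear_combination -hm - hf.eq
  have va := vertex_of_idem he he0 he1
  have vb := vertex_of_idem hf hf0 hf1
  have vc := vertex_of_idem hg hg0' hg1
  let a : GammaVert R := ⟨1 - e, va⟩
  let b : GammaVert R := ⟨1 - f, vb⟩
  let c : GammaVert R := ⟨1 - g, vc⟩
  -- adjacency: 1 = (1 - e) + e, and e ∈ span{1-f} since e*(1-f) = e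
  have key : ∀ s t : R, s * t = 0 → Ideal.span {1 - s} ⊔ Ideal.span {1 - t} = ⊤ := by
    intro s t hst
    rw [span_sup_top_iff]
    exact ⟨1, s, by linear_combination -hst⟩
  have hab : (Gamma R).Adj a b := by
    refine ⟨fun h => ?_, key e f hef⟩
    have : 1 - e = 1 - f := congrArg Subtype.val h
    have hef' : e = f := by linear_combination -this
    apply he0
    rw [hef'] at hef
    rw [hef', ← hf.eq]; exact hef
  have hac : (Gamma R).Adj a c := by
    refine ⟨fun h => ?_, key e g heg⟩
    have : 1 - e = 1 - g := congrArg Subtype.val h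
    have heg' : e = g := by linear_combination -this
    apply he0
    rw [heg'] at heg
    rw [heg', ← hg.eq]; exact heg
  have hbc : (Gamma R).Adj b c := by
    refine ⟨fun h => ?_, key f g hfg⟩
    have : 1 - f = 1 - g := congrArg Subtype.val h
    have hfg' : f = g := by linear_combination -this
    apply hf0
    rw [hfg'] at hfg
    rw [hfg', ← hg.eq]; exact hfg
  exact no_triangle_of_bipartite hB hab hac hbc

/-- In a clean ring with bipartite `Γ(R)`, the quotient by a nontrivial idempotent is
local. -/
lemma quot_local (hB : IsBipartiteGraph (Gamma R))
    (hclean : ∀ r : R, ∃ e v : R, IsIdempotentElem e ∧ IsUnit v ∧ r = e + v)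
    {e : R} (he : IsIdempotentElem e) (h0 : e ≠ 0) (h1 : e ≠ 1) :
    IsLocalRing (R ⧸ Ideal.span {e}) := by
  set I : Ideal R := Ideal.span {e} with hI
  have hIne : I ≠ ⊤ := by
    rw [hI, Ne, Ideal.span_singleton_eq_top]
    intro hu
    exact h1 (idem_eq_one_of_isUnit he hu)
  haveI : Nontrivial (R ⧸ I) := Ideal.Quotient.nontrivial_iff.mpr hIne
  have hcleanQ : ∀ r : R ⧸ I, ∃ ε v : R ⧸ I, IsIdempotentElem ε ∧ IsUnit v ∧ r = ε + v := by
    intro r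
    obtain ⟨x, rfl⟩ := Ideal.Quotient.mk_surjective r
    obtain ⟨ε, v, hε, hv, hx⟩ := hclean x
    exact ⟨Ideal.Quotient.mk I ε, Ideal.Quotient.mk I v,
      by show _ * _ = _; rw [← map_mul, hε.eq],
      hv.map (Ideal.Quotient.mk I), by rw [hx, map_add]⟩
  by_contra hnl
  -- then some idempotent of R ⧸ I is nontrivial
  have : ¬∀ ε : R ⧸ I, IsIdempotentElem ε → ε = 0 ∨ ε = 1 := by
    intro h
    exact hnl (local_of_clean_trivIdem hcleanQ h)
  push_neg at this
  obtain ⟨ε, hε, hε0, hε1⟩ := this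
  obtain ⟨x, rfl⟩ := Ideal.Quotient.mk_surjective ε
  -- lift: f := x * (1 - e) is an idempotent of R congruent to x mod I
  have hxx : x * x - x ∈ I := by
    rw [← Ideal.Quotient.eq_zero_iff_mem]
    have : Ideal.Quotient.mk I (x * x - x) =
        Ideal.Quotient.mk I x * Ideal.Quotient.mk I x - Ideal.Quotient.mk I x := by
      rw [map_sub, map_mul]
    rw [this, hε.eq, sub_self]
  obtain ⟨k, hk⟩ := Ideal.mem_span_singleton'.mp hxx
  set f : R := x * (1 - e) with hfdef
  have hx2 : x * x = x + k * e := by linear_combination -hk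
  have h1e : (1 - e) * (1 - e) = 1 - e := by linear_combination he.eq
  have hf : IsIdempotentElem f := by
    show f * f = f
    rw [hfdef]
    calc x * (1 - e) * (x * (1 - e)) = (x * x) * ((1 - e) * (1 - e)) := by ring
      _ = (x + k * e) * (1 - e) := by rw [hx2, h1e]
      _ = x * (1 - e) + k * (e - e * e) := by ring
      _ = x * (1 - e) := by rw [he.eq]; ring
  have hfe : f * e = 0 := by rw [hfdef]; linear_combination -x * he.eq
  have hmkf : Ideal.Quotient.mk I f = Ideal.Quotient.mk I x := by
    rw [hfdef]
    have : x * (1 - e) - x = (-x) * e := by ring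
    rw [Ideal.Quotient.eq]
    rw [this]
    exact Ideal.mul_mem_left _ _ (Ideal.mem_span_singleton'.mpr ⟨1, one_mul e⟩)
  have hf0 : f ≠ 0 := by
    intro h
    apply hε0
    rw [← hmkf, h, map_zero]
  have hg0 : 1 - e - f ≠ 0 := by
    intro h
    apply hε1
    have h1f : (1 : R) - f = e := by linear_combination h
    have : Ideal.Quotient.mk I ((1:R) - f) = 0 := by
      rw [h1f, Ideal.Quotient.eq_zero_iff_mem]
      exact Ideal.mem_span_singleton'.mpr ⟨1, one_mul e⟩
    rw [map_sub, map_one, hmkf, sub_eq_zero] at this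
    exact this.symm
  exact (triangle_of_idems hB he hf (by linear_combination hfe) h0 hf0 hg0).elim

lemma local_jacobson_bot_iff {S : Type*} [CommRing S] [IsLocalRing S] {p : S} :
    p ∈ (⊥ : Ideal S).jacobson ↔ ¬IsUnit p := by
  rw [IsLocalRing.jacobson_eq_maximalIdeal (⊥ : Ideal S) bot_ne_top,
    IsLocalRing.mem_maximalIdeal]
  exact mem_nonunits_iff

lemma local_isCoprime_iff {S : Type*} [CommRing S] [IsLocalRing S] {p q : S} :
    IsCoprime p q ↔ (IsUnit p ∨ IsUnit q) := by
  constructor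
  · rintro ⟨a, b, hab⟩
    by_contra hh
    push_neg at hh
    have hp : p ∈ IsLocalRing.maximalIdeal S := (IsLocalRing.mem_maximalIdeal p).mpr hh.1
    have hq : q ∈ IsLocalRing.maximalIdeal S := (IsLocalRing.mem_maximalIdeal q).mpr hh.2
    have h1 : (1 : S) ∈ IsLocalRing.maximalIdeal S := by
      rw [← hab]
      exact Ideal.add_mem _ (Ideal.mul_mem_left _ _ hp) (Ideal.mul_mem_left _ _ hq)
    exact (IsLocalRing.maximalIdeal.isMaximal S).ne_top
      (Ideal.eq_top_of_isUnit_mem _ h1 isUnit_one)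
  · rintro (h | h)
    · obtain ⟨a, ha⟩ := h.exists_left_inv
      exact ⟨a, 0, by rw [zero_mul, add_zero, ha]⟩
    · obtain ⟨a, ha⟩ := h.exists_left_inv
      exact ⟨0, a, by rw [zero_mul, zero_add, ha]⟩

end Helpers

section MainHelpers

variable {R : Type u} [CommRing R]

/-- Bipartite implies the ring decomposes as a product of two local rings. -/
lemma decomp_of_bipartite [Nontrivial R] (h : ¬IsLocalRing R)
    (hclean : ∀ r : R, ∃ e v : R, IsIdempotentElem e ∧ IsUnit v ∧ r = e + v)
    (hB : IsBipartiteGraph (Gamma R)) :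
    ∃ (R₁ R₂ : Type u) (_ : CommRing R₁) (_ : CommRing R₂),
      IsLocalRing R₁ ∧ IsLocalRing R₂ ∧ Nonempty (R ≃+* (R₁ × R₂)) := by
  -- get a nontrivial idempotent
  have : ¬∀ ε : R, IsIdempotentElem ε → ε = 0 ∨ ε = 1 := by
    intro hh
    exact h (local_of_clean_trivIdem hclean hh)
  push_neg at this
  obtain ⟨e, he, he0, he1⟩ := this
  have he' : IsIdempotentElem (1 - e) := he.one_sub
  have he'0 : (1 : R) - e ≠ 0 := fun hh => he1 (by linear_combination -hh)
  have he'1 : (1 : R) - e ≠ 1 := fun hh => he0 (by linear_combination -hh)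
  set I : Ideal R := Ideal.span {e} with hI
  set J : Ideal R := Ideal.span {1 - e} with hJ
  have locI : IsLocalRing (R ⧸ I) := quot_local hB hclean he he0 he1
  have locJ : IsLocalRing (R ⧸ J) := quot_local hB hclean he' he'0 he'1
  have hsup : I ⊔ J = ⊤ := by
    rw [Ideal.eq_top_iff_one]
    exact Submodule.mem_sup.mpr ⟨e, Ideal.mem_span_singleton'.mpr ⟨1, one_mul e⟩,
      1 - e, Ideal.mem_span_singleton'.mpr ⟨1, one_mul _⟩, by ring⟩
  have hinf : I ⊓ J = ⊥ := by
    rw [eq_bot_iff]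
    rintro x ⟨hxI, hxJ⟩
    obtain ⟨a, ha⟩ := Ideal.mem_span_singleton'.mp hxI
    obtain ⟨b, hb⟩ := Ideal.mem_span_singleton'.mp hxJ
    have hx : x = 0 := by
      have h1 : x * e = 0 := by rw [← hb]; linear_combination -b * he.eq
      have h2 : x * (1 - e) = 0 := by rw [← ha]; linear_combination -a * he.eq
      linear_combination h1 + h2
    exact hx ▸ (Ideal.zero_mem ⊥)
  have hcop : IsCoprime I J := Ideal.isCoprime_iff_sup_eq.mpr hsup
  have eq1 : R ≃+* R ⧸ (I ⊓ J) := by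
    refine RingEquiv.ofBijective (Ideal.Quotient.mk (I ⊓ J)) ⟨?_, Ideal.Quotient.mk_surjective⟩
    rw [RingHom.injective_iff_ker_eq_bot, Ideal.mk_ker, hinf]
  exact ⟨R ⧸ I, R ⧸ J, inferInstance, inferInstance, locI, locJ,
    ⟨eq1.trans (Ideal.quotientInfEquivQuotientProd I J hcop)⟩⟩

/-- Product of two local rings gives a complete bipartite `Γ(R)`. -/
lemma completeBipartite_of_decomp {R₁ R₂ : Type u} [CommRing R₁] [CommRing R₂]
    [IsLocalRing R₁] [IsLocalRing R₂] (φ : R ≃+* (R₁ × R₂)) :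
    IsCompleteBipartiteGraph (Gamma R) := by
  -- transfer of units
  have hunit : ∀ x : R, IsUnit x ↔ IsUnit (φ x) := by
    intro x
    constructor
    · exact fun h => h.map φ
    · intro h
      have := h.map φ.symm
      rwa [RingEquiv.symm_apply_apply] at this
  -- transfer of jacobson bot
  have hjac : ∀ x : R, x ∈ (⊥ : Ideal R).jacobson ↔
      (φ x).1 ∈ (⊥ : Ideal R₁).jacobson ∧ (φ x).2 ∈ (⊥ : Ideal R₂).jacobson := by
    intro x
    rw [Ideal.mem_jacobson_bot, Ideal.mem_jacobson_bot, Ideal.mem_jacobson_bot]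
    constructor
    · intro h
      constructor
      · intro y
        have := h (φ.symm (y, 0))
        have h2 : IsUnit (φ (x * φ.symm (y, 0) + 1)) := ((hunit _).mp this)
        rw [map_add, map_mul, RingEquiv.apply_symm_apply, map_one] at h2
        have := (prod_isUnit_iff'.mp h2).1
        simpa using this
      · intro y
        have := h (φ.symm (0, y))
        have h2 : IsUnit (φ (x * φ.symm (0, y) + 1)) := ((hunit _).mp this)
        rw [map_add, map_mul, RingEquiv.apply_symm_apply, map_one] at h2
        have := (prod_isUnit_iff'.mp h2).2
        simpa using this
    · rintro ⟨h1, h2⟩ y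
      rw [hunit, map_add, map_mul, map_one]
      rw [prod_isUnit_iff']
      exact ⟨by simpa using h1 (φ y).1, by simpa using h2 (φ y).2⟩
  -- vertex characterization
  have hvert : ∀ a : GammaVert R,
      (IsUnit (φ a.1).1 ∧ ¬IsUnit (φ a.1).2) ∨ (¬IsUnit (φ a.1).1 ∧ IsUnit (φ a.1).2) := by
    rintro ⟨x, hx1, hx2⟩
    have h1 : ¬(IsUnit (φ x).1 ∧ IsUnit (φ x).2) := by
      intro hh
      exact hx1 ((hunit x).mpr (prod_isUnit_iff'.mpr hh))
    have h2 : ¬(¬IsUnit (φ x).1 ∧ ¬IsUnit (φ x).2) := by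
      intro hh
      exact hx2 ((hjac x).mpr ⟨local_jacobson_bot_iff.mpr hh.1, local_jacobson_bot_iff.mpr hh.2⟩)
    by_cases c1 : IsUnit (φ x).1
    · left; exact ⟨c1, fun c2 => h1 ⟨c1, c2⟩⟩
    · right; exact ⟨c1, by
        by_contra c2
        exact h2 ⟨c1, c2⟩⟩
  -- coprimality transfer
  have hcop : ∀ x y : R, IsCoprime x y ↔
      (IsCoprime (φ x).1 (φ y).1 ∧ IsCoprime (φ x).2 (φ y).2) := by
    intro x y
    constructor
    · intro h
      have h1 := h.map φ.toRingHom
      constructor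
      · have := h1.map (RingHom.fst R₁ R₂)
        exact this
      · have := h1.map (RingHom.snd R₁ R₂)
        exact this
    · rintro ⟨⟨a1, b1, h1⟩, ⟨a2, b2, h2⟩⟩
      have : IsCoprime (φ x) (φ y) := ⟨(a1, a2), (b1, b2), by
        ext
        · simpa using h1
        · simpa using h2⟩
      have h3 := this.map φ.symm.toRingHom
      simpa using h3
  -- parts
  refine ⟨{a : GammaVert R | IsUnit (φ a.1).1}, {a : GammaVert R | ¬IsUnit (φ a.1).1},
    ?_, ?_, ?_⟩
  · ext a; simp [em]
  · ext a; simp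
  · intro x y
    constructor
    · rintro ⟨hne, hadj⟩
      rw [span_sup_top_iff, hcop] at hadj
      obtain ⟨h1, h2⟩ := hadj
      rcases hvert x with ⟨hx1, hx2⟩ | ⟨hx1, hx2⟩
      · left
        refine ⟨hx1, ?_⟩
        rcases hvert y with ⟨hy1, hy2⟩ | ⟨hy1, hy2⟩
        · exact absurd (local_isCoprime_iff.mp h2) (by simp [hx2, hy2])
        · exact hy1
      · right
        refine ⟨hx1, ?_⟩
        rcases hvert y with ⟨hy1, hy2⟩ | ⟨hy1, hy2⟩
        · exact hy1
        · exact absurd (local_isCoprime_iff.mp h1) (by simp [hx1, hy1])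
    · rintro (⟨hx, hy⟩ | ⟨hx, hy⟩)
      · -- x has unit first comp, y doesn't
        have hy2 : IsUnit (φ y.1).2 := by
          rcases hvert y with ⟨h1, h2⟩ | ⟨h1, h2⟩
          · exact absurd h1 hy
          · exact h2
        refine ⟨?_, ?_⟩
        · intro h
          rw [h] at hx
          exact hy hx
        · rw [span_sup_top_iff, hcop]
          exact ⟨local_isCoprime_iff.mpr (Or.inl hx), local_isCoprime_iff.mpr (Or.inr hy2)⟩
      · have hx2 : IsUnit (φ x.1).2 := by
          rcases hvert x with ⟨h1, h2⟩ | ⟨h1, h2⟩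
          · exact absurd h1 hx
          · exact h2
        refine ⟨?_, ?_⟩
        · intro h
          rw [h] at hx
          exact hx hy
        · rw [span_sup_top_iff, hcop]
          exact ⟨local_isCoprime_iff.mpr (Or.inr hy), local_isCoprime_iff.mpr (Or.inl hx2)⟩

end MainHelpers

/-- Corollary 3.3: for a non-local commutative clean (exchange) ring `R`, the graph
`Γ(R)` is bipartite iff it is complete bipartite, iff `R ≅ R₁ × R₂` with each `Rᵢ`
a local ring. -/
theorem gamma_bipartite_tfae_of_clean (R : Type u) [CommRing R] [Nontrivial R]
    (h : ¬IsLocalRing R)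
    (hclean : ∀ r : R, ∃ e v : R, IsIdempotentElem e ∧ IsUnit v ∧ r = e + v) :
    (IsBipartiteGraph (Gamma R) ↔ IsCompleteBipartiteGraph (Gamma R)) ∧
    (IsCompleteBipartiteGraph (Gamma R) ↔
      (∃ (R₁ R₂ : Type u) (_ : CommRing R₁) (_ : CommRing R₂),
        IsLocalRing R₁ ∧ IsLocalRing R₂ ∧ Nonempty (R ≃+* (R₁ × R₂)))) := by
  have cb_to_b : IsCompleteBipartiteGraph (Gamma R) → IsBipartiteGraph (Gamma R) := by
    rintro ⟨A, B, h1, h2, h3⟩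
    exact ⟨A, B, h1, h2, fun x y hxy => (h3 x y).mp hxy⟩
  have d_to_cb : (∃ (R₁ R₂ : Type u) (_ : CommRing R₁) (_ : CommRing R₂),
      IsLocalRing R₁ ∧ IsLocalRing R₂ ∧ Nonempty (R ≃+* (R₁ × R₂))) →
      IsCompleteBipartiteGraph (Gamma R) := by
    rintro ⟨R₁, R₂, _, _, l1, l2, ⟨φ⟩⟩
    exact completeBipartite_of_decomp φ
  have b_to_d : IsBipartiteGraph (Gamma R) →
      (∃ (R₁ R₂ : Type u) (_ : CommRing R₁) (_ : CommRing R₂),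
        IsLocalRing R₁ ∧ IsLocalRing R₂ ∧ Nonempty (R ≃+* (R₁ × R₂))) :=
    fun hB => decomp_of_bipartite h hclean hB
  exact ⟨⟨fun hB => d_to_cb (b_to_d hB), cb_to_b⟩,
    ⟨fun hCB => b_to_d (cb_to_b hCB), d_to_cb⟩⟩
end

section
/- Let R be a commutative ring with identity and let G = Γ(R). Then the following are equivalent: (1) G has at least two vertices and there exists a vertex of G adjacent to every other vertex (G is a refinement of a star graph); (2) G is a tree, i.e., G is nonempty, connected and contains no cycles; (3) G is a star graph, i.e., G has at least two vertices, some vertex is adjacent to every other vertex, and the remaining vertices form an independent set; (4) R is isomorphic to ℤ/2 × F for some field F. -/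
universe u

namespace GammaAux

section Graph
open SimpleGraph
variable {V : Type*} {G : SimpleGraph V}

lemma cycle3_false (hA : G.IsAcyclic) {a b c : V}
    (h1 : G.Adj a b) (h2 : G.Adj b c) (h3 : G.Adj c a) : False := by
  have hab := h1.ne
  have hbc := h2.ne
  have hca := h3.ne
  apply hA (Walk.cons h1 (Walk.cons h2 (Walk.cons h3 Walk.nil)))
  rw [Walk.isCycle_def]
  refine ⟨?_, by simp, ?_⟩
  · rw [Walk.isTrail_def]
    simp [Sym2.eq_iff]
    tauto
  · simp [hab, hbc, hca.symm]
    tauto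

lemma cycle4_false (hA : G.IsAcyclic) {a b c d : V}
    (h1 : G.Adj a b) (h2 : G.Adj b c) (h3 : G.Adj c d) (h4 : G.Adj d a)
    (hac : a ≠ c) (hbd : b ≠ d) : False := by
  have hab := h1.ne
  have hbc := h2.ne
  have hcd := h3.ne
  have hda := h4.ne
  apply hA (Walk.cons h1 (Walk.cons h2 (Walk.cons h3 (Walk.cons h4 Walk.nil))))
  rw [Walk.isCycle_def]
  refine ⟨?_, by simp, ?_⟩
  · rw [Walk.isTrail_def]
    simp [Sym2.eq_iff]
    tauto
  · simp [hab, hbc, hcd, hda.symm, hac, hbd]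
    tauto

lemma star_acyclic {c : V} (h : ∀ u v : V, u ≠ c → v ≠ c → ¬G.Adj u v) :
    G.IsAcyclic := by
  classical
  intro v p hp
  by_cases hc : c ∈ p.support
  · -- rotate to get a cycle at c
    have hp' := hp.rotate hc
    set q := p.rotate c hc with hq
    clear_value q
    clear hp hq hc
    match q with
    | Walk.nil => exact hp'.ne_nil rfl
    | Walk.cons h1 Walk.nil => exact G.loopless.irrefl c h1
    | Walk.cons (v := x) h1 (Walk.cons (v := y) h2 r) =>
      have hxc : x ≠ c := h1.ne'
      have hyc : y = c := by
        by_contra hyc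
        exact h x y hxc hyc h2
      subst hyc
      match r with
      | Walk.nil =>
        have := hp'.three_le_length
        simp at this
      | Walk.cons h3 r' =>
        have hnd := hp'.support_nodup
        simp [Walk.support_cons] at hnd
  · -- no c in support: first edge contradicts
    match p with
    | Walk.nil => exact hp.ne_nil rfl
    | Walk.cons (v := x) h1 q =>
      have hvc : v ≠ c := by
        intro hvc; apply hc; rw [← hvc]; exact Walk.start_mem_support _
      have hxc : x ≠ c := by
        intro hxc; apply hc; rw [← hxc]
        simp [Walk.support_cons]
      exact h v x hvc hxc h1

lemma star_connected {c : V} (h : ∀ v : V, v ≠ c → G.Adj c v) :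
    G.Connected := by
  rw [connected_iff]
  refine ⟨?_, ⟨c⟩⟩
  intro u v
  have key : ∀ w : V, G.Reachable c w := by
    intro w
    by_cases hw : w = c
    · rw [hw]
    · exact (h w hw).reachable
  exact (key u).symm.trans (key v)

end Graph

variable {R : Type u} [CommRing R]

lemma span_sup_iff {x y : R} :
    Ideal.span {x} ⊔ Ideal.span {y} = ⊤ ↔ ∃ r s : R, r * x + s * y = 1 := by
  constructor
  · intro h
    have h1 : (1 : R) ∈ Ideal.span {x} ⊔ Ideal.span {y} := h ▸ Submodule.mem_top
    rcases Submodule.mem_sup.mp h1 with ⟨a, ha, b, hb, hab⟩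
    rcases Ideal.mem_span_singleton'.mp ha with ⟨r, hr⟩
    rcases Ideal.mem_span_singleton'.mp hb with ⟨s, hs⟩
    exact ⟨r, s, by rw [hr, hs, hab]⟩
  · rintro ⟨r, s, h⟩
    rw [Ideal.eq_top_iff_one, ← h]
    exact add_mem (Ideal.mem_sup_left (Ideal.mem_span_singleton'.mpr ⟨r, rfl⟩))
      (Ideal.mem_sup_right (Ideal.mem_span_singleton'.mpr ⟨s, rfl⟩))

lemma gamma_adj {a b : GammaVert R} :
    (Gamma R).Adj a b ↔ a ≠ b ∧ ∃ r s : R, r * a.1 + s * b.1 = 1 := by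
  have h : (Gamma R).Adj a b ↔ a ≠ b ∧ (Ideal.span {a.1} ⊔ Ideal.span {b.1} = ⊤) := Iff.rfl
  rw [h, span_sup_iff]

lemma vne_iff {a b : GammaVert R} : a ≠ b ↔ a.1 ≠ b.1 :=
  not_congr (by exact Subtype.ext_iff)

lemma mul_self_mem_jac {x : R} (h : x * x ∈ (⊥ : Ideal R).jacobson) :
    x ∈ (⊥ : Ideal R).jacobson := by
  rw [Ideal.jacobson, Submodule.mem_sInf] at h ⊢
  intro I hI
  exact ((hI.2.isPrime.mem_or_mem (h I hI)).elim id id)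

lemma isUnit_one_sub_of_mem_jac {x : R} (h : x ∈ (⊥ : Ideal R).jacobson) :
    IsUnit (1 - x) := by
  have h2 := Ideal.mem_jacobson_bot.mp h (-1)
  have e : x * (-1) + 1 = 1 - x := by ring
  rwa [e] at h2

lemma eq_zero_of_isUnit_mul_eq_zero {z y : R} (hz : IsUnit z) (h : z * y = 0) : y = 0 := by
  obtain ⟨s, hs⟩ := isUnit_iff_exists_inv.mp hz
  linear_combination s * h - y * hs

lemma exists_neighbor {x : R} (hxu : ¬IsUnit x) (hxj : x ∉ (⊥ : Ideal R).jacobson) :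
    ∃ r : R, ¬IsUnit (1 - r * x) ∧ (1 - r * x) ∉ (⊥ : Ideal R).jacobson := by
  rw [Ideal.mem_jacobson_bot] at hxj
  push_neg at hxj
  obtain ⟨y, hy⟩ := hxj
  refine ⟨-y, ?_, ?_⟩
  · have e : 1 - (-y) * x = x * y + 1 := by ring
    rw [e]; exact hy
  · intro hJ
    have h2 := Ideal.mem_jacobson_bot.mp hJ (-1)
    have e : (1 - -y * x) * (-1) + 1 = (-y) * x := by ring
    rw [e] at h2
    exact hxu (isUnit_of_mul_isUnit_right h2)

lemma notUnit_of_ann {x z : R} (hz : x * z = 0) (h0 : z ≠ 0) : ¬IsUnit x :=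
  fun h => h0 (eq_zero_of_isUnit_mul_eq_zero h hz)

lemma one_sub_idem_vert {v : R} (hv : v * v = v) (h0 : v ≠ 0) (h1 : v ≠ 1) :
    ¬IsUnit (1 - v) ∧ (1 - v) ∉ (⊥ : Ideal R).jacobson := by
  constructor
  · intro h
    exact h0 (eq_zero_of_isUnit_mul_eq_zero h (by linear_combination -hv))
  · intro h
    have h2 := Ideal.mem_jacobson_bot.mp h (-1)
    have e : (1 - v) * (-1) + 1 = v := by ring
    rw [e] at h2
    obtain ⟨s, hs⟩ := isUnit_iff_exists_inv.mp h2
    exact h1 (by linear_combination (1 - v) * hs + s * hv)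

lemma cycle3_false' (hA : (Gamma R).IsAcyclic) {a b c : GammaVert R}
    (h1 : (Gamma R).Adj a b) (h2 : (Gamma R).Adj b c) (h3 : (Gamma R).Adj c a) : False := by
  have hab := h1.ne
  have hbc := h2.ne
  have hca := h3.ne
  apply hA (SimpleGraph.Walk.cons h1 (SimpleGraph.Walk.cons h2 (SimpleGraph.Walk.cons h3 SimpleGraph.Walk.nil)))
  rw [SimpleGraph.Walk.isCycle_def]
  refine ⟨?_, by simp, ?_⟩
  · rw [SimpleGraph.Walk.isTrail_def]
    simp [Sym2.eq_iff]
    tauto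
  · simp [hab, hbc, hca.symm]
    tauto

lemma cycle4_false' (hA : (Gamma R).IsAcyclic) {a b c d : GammaVert R}
    (h1 : (Gamma R).Adj a b) (h2 : (Gamma R).Adj b c) (h3 : (Gamma R).Adj c d)
    (h4 : (Gamma R).Adj d a) (hac : a ≠ c) (hbd : b ≠ d) : False := by
  have hab := h1.ne
  have hbc := h2.ne
  have hcd := h3.ne
  have hda := h4.ne
  apply hA (SimpleGraph.Walk.cons h1 (SimpleGraph.Walk.cons h2 (SimpleGraph.Walk.cons h3
    (SimpleGraph.Walk.cons h4 SimpleGraph.Walk.nil))))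
  rw [SimpleGraph.Walk.isCycle_def]
  refine ⟨?_, by simp, ?_⟩
  · rw [SimpleGraph.Walk.isTrail_def]
    simp [Sym2.eq_iff]
    tauto
  · simp [hab, hbc, hcd, hda.symm, hac, hbd]
    tauto

lemma tri_idem (hA : (Gamma R).IsAcyclic) {e g : R} (he : e * e = e) (hg : g * g = g)
    (heg : e * g = 0) (he0 : e ≠ 0) (hg0 : g ≠ 0) (hsum : e + g ≠ 1) : False := by
  have he1 : e ≠ 1 := fun h => hg0 (by linear_combination heg - g * h)
  have hg1 : g ≠ 1 := fun h => he0 (by linear_combination heg - e * h)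
  obtain ⟨hAu, hAj⟩ := one_sub_idem_vert he he0 he1
  obtain ⟨hBu, hBj⟩ := one_sub_idem_vert hg hg0 hg1
  have hCidem : (1 - e - g) * (1 - e - g) = (1 - e - g) := by
    linear_combination he + hg + 2 * heg
  have hC0 : (1 : R) - e - g ≠ 0 := fun h => hsum (by linear_combination -h)
  have hC1 : (1 : R) - e - g ≠ 1 := fun h => he0 (by linear_combination -he - heg - e * h)
  obtain ⟨hCu, hCj⟩ := one_sub_idem_vert hCidem hC0 hC1
  have hCval : (1 : R) - (1 - e - g) = e + g := by ring
  rw [hCval] at hCu hCj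
  set A : GammaVert R := ⟨1 - e, hAu, hAj⟩ with hAdef
  set B : GammaVert R := ⟨1 - g, hBu, hBj⟩ with hBdef
  set C : GammaVert R := ⟨e + g, hCu, hCj⟩ with hCdef
  have hAB : (Gamma R).Adj A B := gamma_adj.mpr
    ⟨vne_iff.mpr (fun h => he0 (by linear_combination -he + heg - e * h)),
     1, e, by linear_combination -heg⟩
  have hBC : (Gamma R).Adj B C := gamma_adj.mpr
    ⟨vne_iff.mpr (fun h => hg0 (by linear_combination -2 * hg - heg - g * h)),
     1, g, by linear_combination hg + heg⟩
  have hCA : (Gamma R).Adj C A := gamma_adj.mpr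
    ⟨vne_iff.mpr (fun h => he0 (by linear_combination -2 * he - heg + e * h)),
     e, 1, by linear_combination he + heg⟩
  exact cycle3_false' hA hAB hBC hCA

lemma exists_idem_vertex (hA : (Gamma R).IsAcyclic) (hC : (Gamma R).Connected) :
    ∃ e : R, e * e = e ∧ (¬IsUnit e ∧ e ∉ (⊥ : Ideal R).jacobson) ∧
      (¬IsUnit (1 - e) ∧ (1 - e) ∉ (⊥ : Ideal R).jacobson) := by
  obtain ⟨⟨x, hxu, hxj⟩⟩ := hC.nonempty
  obtain ⟨r, hbu, hbj⟩ := exists_neighbor hxu hxj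
  have hau : ¬IsUnit (r * x) := fun h => hxu (isUnit_of_mul_isUnit_right h)
  have haj : r * x ∉ (⊥ : Ideal R).jacobson := fun h => hbu (isUnit_one_sub_of_mem_jac h)
  by_cases ha2 : (r*x) * (r*x) = r*x
  · exact ⟨r*x, ha2, ⟨hau, haj⟩, hbu, hbj⟩
  by_cases hb2 : (1 - r*x) * (1 - r*x) = 1 - r*x
  · refine ⟨1 - r*x, hb2, ⟨hbu, hbj⟩, ?_, ?_⟩
    · have h : (1:R) - (1 - r*x) = r*x := by ring
      rw [h]; exact hau
    · have h : (1:R) - (1 - r*x) = r*x := by ring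
      rw [h]; exact haj
  exfalso
  set a := r * x with hadef
  set b := 1 - r * x with hbdef
  have hab : a + b = 1 := by rw [hadef, hbdef]; ring
  have h2u : ¬IsUnit (a*a) := fun h => hau (isUnit_of_mul_isUnit_right h)
  have h2j : a*a ∉ (⊥ : Ideal R).jacobson := fun h => haj (mul_self_mem_jac h)
  have h3u : ¬IsUnit (b*b) := fun h => hbu (isUnit_of_mul_isUnit_right h)
  have h3j : b*b ∉ (⊥ : Ideal R).jacobson := fun h => hbj (mul_self_mem_jac h)
  set A : GammaVert R := ⟨a, hau, haj⟩
  set B : GammaVert R := ⟨b, hbu, hbj⟩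
  set A2 : GammaVert R := ⟨a*a, h2u, h2j⟩
  set B2 : GammaVert R := ⟨b*b, h3u, h3j⟩
  have hAB : (Gamma R).Adj A B := gamma_adj.mpr
    ⟨vne_iff.mpr (fun h => hau (IsUnit.of_mul_eq_one (a := a) 2 (by linear_combination h + hab))),
     1, 1, by linear_combination hab⟩
  have hBA2 : (Gamma R).Adj B A2 := gamma_adj.mpr
    ⟨vne_iff.mpr (fun h => hau (IsUnit.of_mul_eq_one (a := a) (a+1) (by linear_combination -h + hab))),
     2*a + b, 1, by linear_combination (1+a+b)*hab⟩
  have hA2B2 : (Gamma R).Adj A2 B2 := gamma_adj.mpr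
    ⟨vne_iff.mpr (fun h => hau (IsUnit.of_mul_eq_one (a := a) (4*a)
       (by linear_combination (1+2*a)*h + ((1+b-a)*(1+2*a))*hab))),
     3 - 2*a, 1 + 2*a, by linear_combination ((1+b-a)*(1+2*a))*hab⟩
  have hB2A : (Gamma R).Adj B2 A := gamma_adj.mpr
    ⟨vne_iff.mpr (fun h => hbu (IsUnit.of_mul_eq_one (a := b) (b+1) (by linear_combination h + hab))),
     1, 2*b + a, by linear_combination (1+a+b)*hab⟩
  exact cycle4_false' hA hAB hBA2 hA2B2 hB2A
    (vne_iff.mpr (fun h => ha2 h.symm)) (vne_iff.mpr (fun h => hb2 h.symm))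

lemma K1 (hA : (Gamma R).IsAcyclic) {e p q : R} (he : e*e = e) (he0 : e ≠ 0)
    (hf0 : (1:R) - e ≠ 0)
    (heU : ¬IsUnit e) (heJ : e ∉ (⊥ : Ideal R).jacobson)
    (hfU : ¬IsUnit (1-e)) (hfJ : (1-e) ∉ (⊥ : Ideal R).jacobson)
    (hpe : p*e = 0) (hp0 : p ≠ 0) (hKp : ∀ s : R, s*p ≠ 1-e)
    (hqf : q*(1-e) = 0) (hq0 : q ≠ 0) (hKq : ∀ s : R, s*q ≠ e) : False := by
  have hPu : ¬IsUnit (e + p) := by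
    intro h
    obtain ⟨s, hs⟩ := isUnit_iff_exists_inv.mp h
    exact hKp s (by linear_combination (1-e)*hs + s*he + s*hpe)
  have hPj : (e + p) ∉ (⊥ : Ideal R).jacobson := by
    intro h
    have h2 := isUnit_one_sub_of_mem_jac h
    have hz : (1 - (e+p))*e = 0 := by linear_combination -he - hpe
    exact he0 (eq_zero_of_isUnit_mul_eq_zero h2 hz)
  have hQu : ¬IsUnit (q + (1-e)) := by
    intro h
    obtain ⟨s, hs⟩ := isUnit_iff_exists_inv.mp h
    exact hKq s (by linear_combination e*hs + s*hqf + s*he)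
  have hQj : (q + (1-e)) ∉ (⊥ : Ideal R).jacobson := by
    intro h
    have h2 := isUnit_one_sub_of_mem_jac h
    have hz : (1 - (q + (1-e)))*(1-e) = 0 := by linear_combination -he - hqf
    exact hf0 (eq_zero_of_isUnit_mul_eq_zero h2 hz)
  set VE : GammaVert R := ⟨e, heU, heJ⟩
  set VF : GammaVert R := ⟨1-e, hfU, hfJ⟩
  set VP : GammaVert R := ⟨e+p, hPu, hPj⟩
  set VQ : GammaVert R := ⟨q+(1-e), hQu, hQj⟩
  have h1 : (Gamma R).Adj VE VQ := gamma_adj.mpr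
    ⟨vne_iff.mpr (fun h => hf0 (by linear_combination -(1-e)*h - hqf - 2*he)),
     1, 1-e, by linear_combination hqf + he⟩
  have h2 : (Gamma R).Adj VQ VP := gamma_adj.mpr
    ⟨vne_iff.mpr (fun h => hKq 1 (by linear_combination e*h + hqf + hpe + 2*he)),
     1-e, e, by linear_combination hqf + 2*he + hpe⟩
  have h3 : (Gamma R).Adj VP VF := gamma_adj.mpr
    ⟨vne_iff.mpr (fun h => he0 (by linear_combination e*h - 2*he - hpe)),
     e, 1, by linear_combination he + hpe⟩
  have h4 : (Gamma R).Adj VF VE := gamma_adj.mpr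
    ⟨vne_iff.mpr (fun h => he0 (by linear_combination -e*h - 2*he)),
     1, 1, by ring⟩
  exact cycle4_false' hA h1 h2 h3 h4
    (vne_iff.mpr (fun h => hp0 (by linear_combination -h)))
    (vne_iff.mpr (fun h => hq0 (by linear_combination h)))

lemma K3 (hA : (Gamma R).IsAcyclic) {e p v : R} (he : e*e = e) (he0 : e ≠ 0)
    (hf0 : (1:R) - e ≠ 0)
    (heU : ¬IsUnit e) (heJ : e ∉ (⊥ : Ideal R).jacobson)
    (hfU : ¬IsUnit (1-e)) (hfJ : (1-e) ∉ (⊥ : Ideal R).jacobson)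
    (hpe : p*e = 0) (hp0 : p ≠ 0) (hKp : ∀ s : R, s*p ≠ 1-e)
    (hve : v*e = 0) (hvU : ¬IsUnit v) (hvJ : v ∉ (⊥ : Ideal R).jacobson)
    (hvne : v ≠ 1-e) (τ : R) (hτ : τ*v = 1-e) : False := by
  have hPu : ¬IsUnit (e + p) := by
    intro h
    obtain ⟨s, hs⟩ := isUnit_iff_exists_inv.mp h
    exact hKp s (by linear_combination (1-e)*hs + s*he + s*hpe)
  have hPj : (e + p) ∉ (⊥ : Ideal R).jacobson := by
    intro h
    have h2 := isUnit_one_sub_of_mem_jac h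
    have hz : (1 - (e+p))*e = 0 := by linear_combination -he - hpe
    exact he0 (eq_zero_of_isUnit_mul_eq_zero h2 hz)
  set VE : GammaVert R := ⟨e, heU, heJ⟩
  set VF : GammaVert R := ⟨1-e, hfU, hfJ⟩
  set VP : GammaVert R := ⟨e+p, hPu, hPj⟩
  set VV : GammaVert R := ⟨v, hvU, hvJ⟩
  have h1 : (Gamma R).Adj VF VP := gamma_adj.mpr
    ⟨vne_iff.mpr (fun h => he0 (by linear_combination -e*h - 2*he - hpe)),
     1, e, by linear_combination he + hpe⟩
  have h2 : (Gamma R).Adj VP VV := gamma_adj.mpr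
    ⟨vne_iff.mpr (fun h => he0 (by linear_combination e*h - he - hpe + hve)),
     e, τ, by linear_combination he + hpe + hτ⟩
  have h3 : (Gamma R).Adj VV VE := gamma_adj.mpr
    ⟨vne_iff.mpr (fun h => he0 (by linear_combination hve - e*h - he)),
     τ, 1, by linear_combination hτ⟩
  have h4 : (Gamma R).Adj VE VF := gamma_adj.mpr
    ⟨vne_iff.mpr (fun h => he0 (by linear_combination e*h - 2*he)),
     1, 1, by ring⟩
  exact cycle4_false' hA h1 h2 h3 h4
    (vne_iff.mpr (fun h => hvne h.symm))
    (vne_iff.mpr (fun h => hp0 (by linear_combination h)))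

lemma K4 (hA : (Gamma R).IsAcyclic) {e u v : R} (he : e*e = e) (he0 : e ≠ 0)
    (hf0 : (1:R) - e ≠ 0)
    (heU : ¬IsUnit e) (heJ : e ∉ (⊥ : Ideal R).jacobson)
    (hfU : ¬IsUnit (1-e)) (hfJ : (1-e) ∉ (⊥ : Ideal R).jacobson)
    (hu : u*(1-e) = 0) (huU : ¬IsUnit u) (huJ : u ∉ (⊥ : Ideal R).jacobson)
    (hune : u ≠ e) (σ : R) (hσ : σ*u = e)
    (hv : v*e = 0) (hvU : ¬IsUnit v) (hvJ : v ∉ (⊥ : Ideal R).jacobson)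
    (hvne : v ≠ 1-e) (τ : R) (hτ : τ*v = 1-e) : False := by
  set VE : GammaVert R := ⟨e, heU, heJ⟩
  set VF : GammaVert R := ⟨1-e, hfU, hfJ⟩
  set VU : GammaVert R := ⟨u, huU, huJ⟩
  set VV : GammaVert R := ⟨v, hvU, hvJ⟩
  have h1 : (Gamma R).Adj VE VV := gamma_adj.mpr
    ⟨vne_iff.mpr (fun h => he0 (by linear_combination e*h - he + hv)),
     1, τ, by linear_combination hτ⟩
  have h2 : (Gamma R).Adj VV VU := gamma_adj.mpr
    ⟨vne_iff.mpr (fun h => he0 (by linear_combination -hσ + σ*hu + σ*hv - σ*e*h)),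
     τ, σ, by linear_combination hτ + hσ⟩
  have h3 : (Gamma R).Adj VU VF := gamma_adj.mpr
    ⟨vne_iff.mpr (fun h => hf0 (by linear_combination -(1-e)*h + hu - he)),
     σ, 1, by linear_combination hσ⟩
  have h4 : (Gamma R).Adj VF VE := gamma_adj.mpr
    ⟨vne_iff.mpr (fun h => he0 (by linear_combination -e*h - 2*he)),
     1, 1, by ring⟩
  exact cycle4_false' hA h1 h2 h3 h4
    (vne_iff.mpr (fun h => hune h.symm))
    (vne_iff.mpr (fun h => hvne h))

lemma K2 (hA : (Gamma R).IsAcyclic) {e v : R} (he : e*e = e) (he0 : e ≠ 0)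
    (hve : v*e = 0) (hvJ : v ∉ (⊥ : Ideal R).jacobson)
    (hKv : ∀ s : R, s*v ≠ 1-e) : False := by
  have hf0 : (1:R) - e ≠ 0 := fun h => hKv 0 (by rw [h]; ring)
  have hvU : ¬IsUnit v := notUnit_of_ann hve he0
  obtain ⟨r, htU, htJ⟩ := exists_neighbor hvU hvJ
  have hep : e*(1-e-r*v) = 0 := by linear_combination -he - r*hve
  have hep2 : e*((1-e-r*v)*(1-e-r*v)) = 0 := by linear_combination (1-e-r*v)*hep
  have hpf : (1-e-r*v)*(1-e) = (1-e-r*v) := by linear_combination he + r*hve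
  have htf : (1-r*v)*(1-e) = (1-e-r*v) := by linear_combination r*hve
  have h1 : (1-r*v)*e = e := by linear_combination -r*hve
  by_cases hdeg : (1-e-r*v)*(1-e-r*v) = 1-e-r*v
  · -- tri_idem with g := 1-e-r*v
    apply tri_idem hA he hdeg hep he0
    · intro h
      exact hKv r (by linear_combination -h)
    · intro h
      have h2 : (1:R) - r*v = 1 := by linear_combination h
      rw [h2] at htU
      exact htU isUnit_one
  · -- C4 : v — t — w — X
    have hwU : ¬IsUnit (e + v) := by
      intro h
      obtain ⟨s, hs⟩ := isUnit_iff_exists_inv.mp h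
      exact hKv s (by linear_combination (1-e)*hs + s*he + s*hve)
    have hwJ : (e + v) ∉ (⊥ : Ideal R).jacobson := by
      intro h
      have h2 := isUnit_one_sub_of_mem_jac h
      have hz : (1 - (e+v))*e = 0 := by linear_combination -he - hve
      exact he0 (eq_zero_of_isUnit_mul_eq_zero h2 hz)
    have hXU : ¬IsUnit (e + (1-e-r*v)*(1-e-r*v)) := by
      intro h
      obtain ⟨s, hs⟩ := isUnit_iff_exists_inv.mp h
      have hes : e*s = e := by linear_combination e*hs - s*hep2 - s*he
      have h3 : s*((1-e-r*v)*(1-e-r*v)) = 1 - e := by linear_combination hs - hes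
      have h4 : (1-r*v)*(e + s*((1-e-r*v)*(1-e))) = 1 := by
        linear_combination h1 + s*((1-e-r*v)*htf) + h3
      exact htU (IsUnit.of_mul_eq_one (a := _) _ h4)
    have hXJ : (e + (1-e-r*v)*(1-e-r*v)) ∉ (⊥ : Ideal R).jacobson := by
      intro h
      have h2 := isUnit_one_sub_of_mem_jac h
      have hz : (1 - (e + (1-e-r*v)*(1-e-r*v)))*e = 0 := by linear_combination -he - hep2
      exact he0 (eq_zero_of_isUnit_mul_eq_zero h2 hz)
    set VV : GammaVert R := ⟨v, hvU, hvJ⟩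
    set VT : GammaVert R := ⟨1 - r*v, htU, htJ⟩
    set VW : GammaVert R := ⟨e + v, hwU, hwJ⟩
    set VX : GammaVert R := ⟨e + (1-e-r*v)*(1-e-r*v), hXU, hXJ⟩
    have g1 : (Gamma R).Adj VV VT := gamma_adj.mpr
      ⟨vne_iff.mpr (fun h => he0 (by linear_combination -e*h + (1+r)*hve)),
       r, 1, by ring⟩
    have g2 : (Gamma R).Adj VT VW := gamma_adj.mpr
      ⟨vne_iff.mpr (fun h => hKv (1+r) (by linear_combination -h)),
       1 - r*e, r, by linear_combination r^2*hve⟩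
    have g3 : (Gamma R).Adj VW VX := gamma_adj.mpr
      ⟨vne_iff.mpr (fun h => by
        -- v = (1-e-r*v)^2 leads to t being a unit
        have h4 : (1-r*v)*(e + (r*(1-e-r*v)+1)*(1-e)) = 1 := by
          linear_combination h1 + (r*(1-e-r*v)+1)*htf - r*h
        exact htU (IsUnit.of_mul_eq_one (a := _) _ h4)),
       2*r - 2*r*e - r^2*v, 1, by linear_combination (1-2*r)*he - r^2*hve⟩
    have g4 : (Gamma R).Adj VX VV := gamma_adj.mpr
      ⟨vne_iff.mpr (fun h => he0 (by linear_combination e*h + hve - he - hep2)),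
       1, 2*r - 2*r*e - r^2*v, by linear_combination he⟩
    exact cycle4_false' hA g1 g2 g3 g4
      (vne_iff.mpr (fun h => he0 (by linear_combination -h)))
      (vne_iff.mpr (fun h => hdeg (by
        linear_combination -(1-e)*h + htf + he - (1-e-r*v)*hpf)))

lemma exists_universal (hA : (Gamma R).IsAcyclic) (hC : (Gamma R).Connected) :
    ∃ c : GammaVert R, (∃ d : GammaVert R, d ≠ c) ∧
      ∀ v : GammaVert R, v ≠ c → (Gamma R).Adj c v := by
  obtain ⟨e, he, ⟨heU, heJ⟩, hfU, hfJ⟩ := exists_idem_vertex hA hC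
  have he0 : e ≠ 0 := fun h => heJ (h ▸ zero_mem _)
  have hf0 : (1:R) - e ≠ 0 := fun h => hfJ (h ▸ zero_mem _)
  have hfidem : (1-e)*(1-e) = 1-e := by linear_combination he
  have hee : (1:R) - (1-e) = e := by ring
  set VE : GammaVert R := ⟨e, heU, heJ⟩
  set VF : GammaVert R := ⟨1-e, hfU, hfJ⟩
  have hEF : VE ≠ VF := vne_iff.mpr (fun h => he0 (by linear_combination e*h - 2*he))
  by_cases hu : ∀ v : GammaVert R, v ≠ VE → (Gamma R).Adj VE v
  · exact ⟨VE, ⟨VF, hEF.symm⟩, hu⟩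
  by_cases hv : ∀ v : GammaVert R, v ≠ VF → (Gamma R).Adj VF v
  · exact ⟨VF, ⟨VE, hEF⟩, hv⟩
  exfalso
  push_neg at hu hv
  obtain ⟨u, huNe, huNadj⟩ := hu
  obtain ⟨w, hwNe, hwNadj⟩ := hv
  have hKu : ∀ s : R, s*(u.1*(1-e)) ≠ 1-e := by
    intro s hs
    exact huNadj (gamma_adj.mpr ⟨huNe.symm, 1, s*(1-e), by linear_combination hs⟩)
  have hKw : ∀ s : R, s*(w.1*e) ≠ e := by
    intro s hs
    exact hwNadj (gamma_adj.mpr ⟨hwNe.symm, 1, s*e, by linear_combination hs⟩)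
  by_cases hpJ : u.1*(1-e) ∈ (⊥ : Ideal R).jacobson
  · have hq'J : u.1*e ∉ (⊥ : Ideal R).jacobson := by
      intro h
      apply u.2.2
      have h2 := add_mem h hpJ
      rwa [show u.1*e + u.1*(1-e) = u.1 from by ring] at h2
    by_cases hue : ∃ s : R, s*(u.1*e) = e
    · obtain ⟨σ, hσ⟩ := hue
      by_cases hqJ : w.1*e ∈ (⊥ : Ideal R).jacobson
      · by_cases hp0 : u.1*(1-e) = 0
        · -- u is "unit in first coordinate" type
          have hσu : σ*u.1 = e := by linear_combination hσ + σ*hp0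
          have hune : u.1 ≠ e := vne_iff.mp huNe
          by_cases hq0 : w.1*e = 0
          · by_cases hwf : ∃ s : R, s*(w.1*(1-e)) = 1-e
            · obtain ⟨τ, hτ'⟩ := hwf
              have hτ : τ*w.1 = 1-e := by linear_combination hτ' + τ*hq0
              exact K4 hA he he0 hf0 heU heJ hfU hfJ hp0 u.2.1 u.2.2 hune σ hσu
                hq0 w.2.1 w.2.2 (vne_iff.mp hwNe) τ hτ
            · push_neg at hwf
              have hKw' : ∀ s : R, s*w.1 ≠ 1-e := by
                intro s hs
                exact hwf s (by linear_combination hs - s*hq0)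
              exact K2 hA he he0 hq0 w.2.2 hKw'
          · -- K3 with idempotent 1-e, p := w.1*e, v := u.1
            exact K3 hA hfidem hf0 (by rw [hee]; exact he0) hfU hfJ
              (by rw [hee]; exact heU) (by rw [hee]; exact heJ)
              (show (w.1*e)*(1-e) = 0 by linear_combination -w.1*he)
              hq0
              (by intro s hs; exact hKw s (by rw [hee] at hs; exact hs))
              (show u.1*(1-e) = 0 from hp0) u.2.1 u.2.2
              (by rw [hee]; exact hune) σ (by rw [hee]; exact hσu)
        · -- Ua for u
          by_cases hq0 : w.1*e = 0
          · by_cases hwf : ∃ s : R, s*(w.1*(1-e)) = 1-e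
            · obtain ⟨τ, hτ'⟩ := hwf
              have hτ : τ*w.1 = 1-e := by linear_combination hτ' + τ*hq0
              exact K3 hA he he0 hf0 heU heJ hfU hfJ
                (show (u.1*(1-e))*e = 0 by linear_combination -u.1*he)
                hp0 hKu hq0 w.2.1 w.2.2 (vne_iff.mp hwNe) τ hτ
            · push_neg at hwf
              have hKw' : ∀ s : R, s*w.1 ≠ 1-e := by
                intro s hs
                exact hwf s (by linear_combination hs - s*hq0)
              exact K2 hA he he0 hq0 w.2.2 hKw'
          · exact K1 hA he he0 hf0 heU heJ hfU hfJ
              (show (u.1*(1-e))*e = 0 by linear_combination -u.1*he)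
              hp0 hKu
              (show (w.1*e)*(1-e) = 0 by linear_combination -w.1*he)
              hq0 hKw
      · -- w.1*e ∉ J : K2 with idempotent 1-e and element w.1*e
        apply K2 hA hfidem hf0
          (show (w.1*e)*(1-e) = 0 from by linear_combination -w.1*he)
        · exact hqJ
        · intro s hs
          exact hKw s (by linear_combination hs)
    · -- e not in span of u.1*e : K2 mirror
      push_neg at hue
      apply K2 hA hfidem hf0
        (show (u.1*e)*(1-e) = 0 from by linear_combination -u.1*he)
      · exact hq'J
      · intro s hs
        exact hue s (by linear_combination hs)
  · exact K2 hA he he0 (show (u.1*(1-e))*e = 0 by linear_combination -u.1*he) hpJ hKu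

lemma two_zmod2 (a : ZMod 2) : a = 0 ∨ a = 1 := by revert a; decide

lemma universal_to_iso
    (c : GammaVert R) (hc : ∀ v : GammaVert R, v ≠ c → (Gamma R).Adj c v) :
    ∃ (F : Type u) (_ : Field F), Nonempty (R ≃+* (ZMod 2 × F)) := by
  classical
  set e : R := c.1 with hedef
  have heU : ¬IsUnit e := c.2.1
  have heJ : e ∉ (⊥ : Ideal R).jacobson := c.2.2
  have he0 : e ≠ 0 := fun h => heJ (h ▸ zero_mem _)
  -- e is idempotent
  have he : e * e = e := by
    by_contra hne
    have h2u : ¬IsUnit (e*e) := fun h => heU (isUnit_of_mul_isUnit_right h)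
    have h2j : e*e ∉ (⊥ : Ideal R).jacobson := fun h => heJ (mul_self_mem_jac h)
    have hadj := hc ⟨e*e, h2u, h2j⟩ (vne_iff.mpr hne)
    obtain ⟨-, r, s, hrs⟩ := gamma_adj.mp hadj
    exact heU (IsUnit.of_mul_eq_one (a := e) (r + s*e) (by linear_combination hrs))
  have hf0 : (1:R) - e ≠ 0 := by
    intro h
    exact heU (IsUnit.of_mul_eq_one (a := e) 1 (by linear_combination -h))
  -- star property: x*e ∈ J or x*e = e
  have star : ∀ x : R, x*e ∈ (⊥ : Ideal R).jacobson ∨ x*e = e := by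
    intro x
    by_contra hcon
    push_neg at hcon
    obtain ⟨hxJ, hxe⟩ := hcon
    have hxu : ¬IsUnit (x*e) := by
      intro h
      obtain ⟨s, hs⟩ := isUnit_iff_exists_inv.mp h
      exact heU (IsUnit.of_mul_eq_one (a := e) (x*s) (by linear_combination hs))
    have hadj := hc ⟨x*e, hxu, hxJ⟩ (vne_iff.mpr hxe)
    obtain ⟨-, r, s, hrs⟩ := gamma_adj.mp hadj
    exact heU (IsUnit.of_mul_eq_one (a := e) (r + s*x) (by linear_combination hrs))
  -- F2: x*e = 0 or x*e = e
  have F2 : ∀ x : R, x*e = 0 ∨ x*e = e := by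
    intro x
    rcases star x with hJ | hE
    · rcases star (1 + x) with hJ' | hE'
      · exfalso
        apply heJ
        have h2 := sub_mem hJ' hJ
        rwa [show (1+x)*e - x*e = e from by ring] at h2
      · left; linear_combination hE'
    · right; exact hE
  -- the two ideals
  set I : Ideal R := Ideal.span {1 - e} with hIdef
  set K : Ideal R := Ideal.span {e} with hKdef
  -- quotient by K is a field
  have hKunit : ∀ x : R, x ∉ K → IsUnit (Ideal.Quotient.mk K x) := by
    intro x hx
    by_contra hu
    have hwU : ¬IsUnit (e + x*(1-e)) := by
      intro h
      apply hu
      have : Ideal.Quotient.mk K (e + x*(1-e)) = Ideal.Quotient.mk K x := by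
        rw [Ideal.Quotient.mk_eq_mk_iff_sub_mem]
        exact Ideal.mem_span_singleton'.mpr ⟨1 - x, by ring⟩
      rw [← this]
      exact h.map (Ideal.Quotient.mk K)
    have hwJ : (e + x*(1-e)) ∉ (⊥ : Ideal R).jacobson := by
      intro h
      have h2 := isUnit_one_sub_of_mem_jac h
      have hz : (1 - (e + x*(1-e)))*e = 0 := by linear_combination (x - 1)*he
      exact he0 (eq_zero_of_isUnit_mul_eq_zero h2 hz)
    have hwne : e + x*(1-e) ≠ e := by
      intro h
      apply hx
      exact Ideal.mem_span_singleton'.mpr ⟨x, by linear_combination -h⟩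
    have hadj := hc ⟨e + x*(1-e), hwU, hwJ⟩ (vne_iff.mpr hwne)
    obtain ⟨-, r, s, hrs⟩ := gamma_adj.mp hadj
    apply hu
    refine IsUnit.of_mul_eq_one (a := _) (Ideal.Quotient.mk K (s*(1-e))) ?_
    rw [← map_mul, ← map_one (Ideal.Quotient.mk K), Ideal.Quotient.mk_eq_mk_iff_sub_mem]
    exact Ideal.mem_span_singleton'.mpr ⟨-r-s, by linear_combination -hrs⟩
  -- quotient by K is a field
  have hK1 : (1:R) ∉ K := by
    intro h
    obtain ⟨a, ha⟩ := Ideal.mem_span_singleton'.mp h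
    exact heU (IsUnit.of_mul_eq_one (a := e) a (by linear_combination ha))
  have hKfield : IsField (R ⧸ K) := by
    constructor
    · refine ⟨0, 1, ?_⟩
      intro h
      apply hK1
      rw [← Ideal.Quotient.eq_zero_iff_mem]
      exact h.symm
    · exact mul_comm
    · intro a ha
      obtain ⟨x, rfl⟩ := Ideal.Quotient.mk_surjective a
      have hx : x ∉ K := by
        intro h
        exact ha (Ideal.Quotient.eq_zero_iff_mem.mpr h)
      obtain ⟨b, hb⟩ := isUnit_iff_exists_inv.mp (hKunit x hx)
      exact ⟨b, hb⟩
  -- quotient by I has exactly two elements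
  have hItwo : ∀ x : R, Ideal.Quotient.mk I x = 0 ∨ Ideal.Quotient.mk I x = 1 := by
    intro x
    rcases F2 x with h0 | h1
    · left
      rw [Ideal.Quotient.eq_zero_iff_mem]
      exact Ideal.mem_span_singleton'.mpr ⟨x, by linear_combination -h0⟩
    · right
      rw [← map_one (Ideal.Quotient.mk I), Ideal.Quotient.mk_eq_mk_iff_sub_mem]
      exact Ideal.mem_span_singleton'.mpr ⟨x - 1, by linear_combination -h1⟩
  have hI1 : (1:R) ∉ I := by
    intro h
    obtain ⟨a, ha⟩ := Ideal.mem_span_singleton'.mp h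
    have hunit : IsUnit (1 - e) := IsUnit.of_mul_eq_one (a := _) a (by linear_combination ha)
    exact he0 (eq_zero_of_isUnit_mul_eq_zero hunit (by linear_combination -he))
  have hI10 : (1 : R ⧸ I) ≠ 0 := by
    intro h
    rw [← map_one (Ideal.Quotient.mk I), Ideal.Quotient.eq_zero_iff_mem] at h
    exact hI1 h
  have hItwo0 : (2 : R ⧸ I) = 0 := by
    have h2 : (2:R)*e = 0 := by
      rcases F2 2 with h | h
      · exact h
      · exact absurd (by linear_combination h : e = 0) he0
    have : ((2:R) : R ⧸ I) = 0 := by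
      rw [Ideal.Quotient.eq_zero_iff_mem]
      exact Ideal.mem_span_singleton'.mpr ⟨2, by linear_combination -h2⟩
    rwa [map_ofNat] at this
  -- ring equivalence ZMod 2 ≃+* R ⧸ I
  have hmap_one : ((if (1:ZMod 2) = 0 then 0 else 1 : R ⧸ I)) = 1 := by
    rw [if_neg (by decide)]
  let ψ : ZMod 2 →+* R ⧸ I :=
    { toFun := fun a => if a = 0 then 0 else 1
      map_one' := hmap_one
      map_mul' := by
        intro a b
        rcases two_zmod2 a with rfl | rfl <;> rcases two_zmod2 b with rfl | rfl <;>
          simp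
      map_zero' := by simp
      map_add' := by
        intro a b
        rcases two_zmod2 a with rfl | rfl <;> rcases two_zmod2 b with rfl | rfl
        · simp
        · simp
        · simp
        · rw [if_pos (by decide : ((1:ZMod 2) + 1 = 0)), if_neg (by decide : ¬((1:ZMod 2) = 0))]
          linear_combination -hItwo0 }
  have hψbij : Function.Bijective ψ := by
    constructor
    · intro a b hab
      rcases two_zmod2 a with rfl | rfl <;> rcases two_zmod2 b with rfl | rfl
      · rfl
      · rw [map_zero, map_one] at hab
        exact absurd hab.symm hI10
      · rw [map_zero, map_one] at hab
        exact absurd hab hI10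
      · rfl
    · intro z
      obtain ⟨x, rfl⟩ := Ideal.Quotient.mk_surjective z
      rcases hItwo x with h | h
      · exact ⟨0, by simpa [ψ] using h.symm⟩
      · refine ⟨1, ?_⟩
        simp only [ψ, RingHom.coe_mk, MonoidHom.coe_mk, OneHom.coe_mk]
        rw [if_neg (by decide)]
        exact h.symm
  -- assemble: R ≃+* (R ⧸ I) × (R ⧸ K)
  have hcop : IsCoprime I K := by
    rw [Ideal.isCoprime_iff_sup_eq, span_sup_iff]
    exact ⟨1, 1, by ring⟩
  have hinf : I ⊓ K = ⊥ := by
    refine le_antisymm ?_ bot_le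
    intro x hx
    obtain ⟨hxI, hxK⟩ := hx
    obtain ⟨a, ha⟩ := Ideal.mem_span_singleton'.mp hxI
    obtain ⟨b, hb⟩ := Ideal.mem_span_singleton'.mp hxK
    have : x = 0 := by linear_combination (-e)*ha + (e-1)*hb + (-a-b)*he
    simpa using this
  letI : Field (R ⧸ K) := hKfield.toField
  refine ⟨R ⧸ K, inferInstance, ?_⟩
  have equiv1 : R ≃+* R ⧸ (⊥ : Ideal R) := (RingEquiv.quotientBot R).symm
  have equiv2 : (R ⧸ (⊥ : Ideal R)) ≃+* R ⧸ (I ⊓ K) := Ideal.quotEquivOfEq hinf.symm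
  have equiv3 : (R ⧸ (I ⊓ K)) ≃+* (R ⧸ I) × (R ⧸ K) :=
    Ideal.quotientInfEquivQuotientProd I K hcop
  have equiv4 : (R ⧸ I) ≃+* ZMod 2 := (RingEquiv.ofBijective ψ hψbij).symm
  exact ⟨((equiv1.trans equiv2).trans equiv3).trans
    (RingEquiv.prodCongr equiv4 (RingEquiv.refl _))⟩

lemma prod_isUnit {A B : Type*} [CommRing A] [CommRing B] {a : A} {b : B}
    (ha : IsUnit a) (hb : IsUnit b) : IsUnit ((a, b) : A × B) := by
  obtain ⟨a', ha'⟩ := isUnit_iff_exists_inv.mp ha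
  obtain ⟨b', hb'⟩ := isUnit_iff_exists_inv.mp hb
  refine isUnit_iff_exists_inv.mpr ⟨(a', b'), ?_⟩
  rw [Prod.mk_mul_mk, ha', hb']
  rfl

lemma zmod2_unit {a : ZMod 2} (h : IsUnit a) : a = 1 := by
  rcases two_zmod2 a with rfl | rfl
  · obtain ⟨t, ht⟩ := isUnit_iff_exists_inv.mp h
    rw [zero_mul] at ht
    exact absurd ht (by decide)
  · rfl

lemma iso_to_star (F : Type u) [Field F] (φ : R ≃+* ZMod 2 × F) :
    ∃ c : GammaVert R, (∃ v : GammaVert R, v ≠ c) ∧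
      (∀ v : GammaVert R, v ≠ c → (Gamma R).Adj c v) ∧
      ∀ u v : GammaVert R, u ≠ c → v ≠ c → ¬(Gamma R).Adj u v := by
  have hUnit : ∀ x : R, IsUnit x ↔ IsUnit (φ x) := by
    intro x
    constructor
    · intro h
      exact h.map φ.toRingHom
    · intro h
      have h2 := h.map φ.symm.toRingHom
      simpa using h2
  have hUnitP : ∀ y : ZMod 2 × F, IsUnit y ↔ (y.1 = 1 ∧ y.2 ≠ 0) := by
    intro y
    constructor
    · intro h
      exact ⟨zmod2_unit (h.map (RingHom.fst _ _)), isUnit_iff_ne_zero.mp (h.map (RingHom.snd _ _))⟩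
    · rintro ⟨h1, h2⟩
      have := prod_isUnit (h1 ▸ isUnit_one) (isUnit_iff_ne_zero.mpr h2)
      simpa using this
  have hJacP : ∀ x : R, x ∈ (⊥ : Ideal R).jacobson ↔ φ x = 0 := by
    intro x
    constructor
    · intro h
      have key : ∀ z : ZMod 2 × F, IsUnit (φ x * z + 1) := by
        intro z
        have h1 := Ideal.mem_jacobson_bot.mp h (φ.symm z)
        have h2 := (hUnit _).mp h1
        rwa [map_add, map_mul, map_one, RingEquiv.apply_symm_apply] at h2
      have ha : (φ x).1 = 0 := by
        rcases two_zmod2 (φ x).1 with h0 | h1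
        · exact h0
        · exfalso
          have h2 := (hUnitP _).mp (key (1, 0))
          have h3 : (φ x * (1, 0) + 1).1 = (φ x).1 + 1 := by simp
          rw [h3, h1] at h2
          exact absurd h2.1 (by decide)
      have hb : (φ x).2 = 0 := by
        by_contra hb
        have h2 := (hUnitP _).mp (key (0, -((φ x).2)⁻¹))
        have h3 : (φ x * (0, -((φ x).2)⁻¹) + 1).2 = 0 := by
          have : (φ x).2 * -((φ x).2)⁻¹ + 1 = 0 := by
            rw [mul_neg, mul_inv_cancel₀ hb]; ring
          simpa using this
        exact h2.2 h3
      have : φ x = ((φ x).1, (φ x).2) := rfl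
      rw [this, ha, hb]
      rfl
    · intro h
      have : x = 0 := by
        apply φ.injective
        rw [h, map_zero]
      rw [this]
      exact zero_mem _
  have shape : ∀ v : GammaVert R,
      φ v.1 = (1, 0) ∨ ((φ v.1).1 = 0 ∧ (φ v.1).2 ≠ 0) := by
    intro v
    have hnu : ¬IsUnit (φ v.1) := fun h => v.2.1 ((hUnit _).mpr h)
    have hnz : φ v.1 ≠ 0 := fun h => v.2.2 ((hJacP _).mpr h)
    rcases two_zmod2 (φ v.1).1 with h0 | h1
    · right
      refine ⟨h0, fun hb => hnz ?_⟩
      have : φ v.1 = ((φ v.1).1, (φ v.1).2) := rfl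
      rw [this, h0, hb]; rfl
    · left
      have hb : (φ v.1).2 = 0 := by
        by_contra hb
        exact hnu ((hUnitP _).mpr ⟨h1, hb⟩)
      have : φ v.1 = ((φ v.1).1, (φ v.1).2) := rfl
      rw [this, h1, hb]
  -- the center
  have hcU : ¬IsUnit (φ.symm (1, 0)) := by
    rw [hUnit, RingEquiv.apply_symm_apply, hUnitP]
    rintro ⟨-, h2⟩
    exact h2 rfl
  have hcJ : φ.symm (1, 0) ∉ (⊥ : Ideal R).jacobson := by
    rw [hJacP, RingEquiv.apply_symm_apply]
    intro h
    have h2 : (1 : ZMod 2) = 0 := congrArg Prod.fst h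
    exact absurd h2 (by decide)
  set C : GammaVert R := ⟨φ.symm (1, 0), hcU, hcJ⟩ with hCdef
  have hvalC : φ C.1 = (1, 0) := RingEquiv.apply_symm_apply _ _
  -- second vertex
  have hv0U : ¬IsUnit (φ.symm (0, 1)) := by
    rw [hUnit, RingEquiv.apply_symm_apply, hUnitP]
    rintro ⟨h1, -⟩
    exact absurd (show (0 : ZMod 2) = 1 from h1) (by decide)
  have hv0J : φ.symm (0, 1) ∉ (⊥ : Ideal R).jacobson := by
    rw [hJacP, RingEquiv.apply_symm_apply]
    intro h
    exact one_ne_zero (show (1 : F) = 0 from congrArg Prod.snd h)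
  refine ⟨C, ⟨⟨φ.symm (0, 1), hv0U, hv0J⟩, ?_⟩, ?_, ?_⟩
  · refine vne_iff.mpr ?_
    intro h
    have h3 := φ.symm.injective h
    exact absurd (show (0 : ZMod 2) = 1 from congrArg Prod.fst h3) (by decide)
  · intro v hv
    rcases shape v with h | ⟨h1, h2⟩
    · exact absurd (φ.injective (by rw [h, hvalC])) (vne_iff.mp hv)
    · refine gamma_adj.mpr ⟨hv.symm, φ.symm (1, 0), φ.symm (0, ((φ v.1).2)⁻¹), ?_⟩
      apply φ.injective
      rw [map_add, map_mul, map_mul, map_one, RingEquiv.apply_symm_apply,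
        RingEquiv.apply_symm_apply]
      have hval : φ v.1 = (0, (φ v.1).2) := by
        have h3 : φ v.1 = ((φ v.1).1, (φ v.1).2) := rfl
        rw [h3, h1]
      rw [hval, Prod.mk_mul_mk, Prod.mk_mul_mk, Prod.mk_add_mk, inv_mul_cancel₀ h2]
      simp
  · intro u v hu hv hadj
    obtain ⟨-, r, s, hrs⟩ := gamma_adj.mp hadj
    have hu2 : (φ u.1).1 = 0 := by
      rcases shape u with h | ⟨h1, -⟩
      · exfalso
        have h3 : u.1 = φ.symm (1, 0) := by
          apply φ.injective
          rw [h, RingEquiv.apply_symm_apply]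
        exact (vne_iff.mp hu) h3
      · exact h1
    have hv2 : (φ v.1).1 = 0 := by
      rcases shape v with h | ⟨h1, -⟩
      · exfalso
        have h3 : v.1 = φ.symm (1, 0) := by
          apply φ.injective
          rw [h, RingEquiv.apply_symm_apply]
        exact (vne_iff.mp hv) h3
      · exact h1
    have h2 := congrArg (fun z => (φ z).1) hrs
    simp only [map_add, map_mul, map_one] at h2
    rw [Prod.fst_add, Prod.fst_mul, Prod.fst_mul, hu2, hv2, mul_zero, mul_zero] at h2
    simp at h2

end GammaAux

/-- Theorem 3.4: for `G = Γ(R)`, the following are equivalent: `G` is a refinement of a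
star graph; `G` is a tree; `G` is a star graph; `R ≅ ℤ/2 × F` for some field `F`. -/
theorem gamma_star_tfae (R : Type u) [CommRing R] :
    (((∃ a b : GammaVert R, a ≠ b) ∧
        ∃ c : GammaVert R, ∀ v : GammaVert R, v ≠ c → (Gamma R).Adj c v) ↔
      ((Gamma R).Connected ∧ (Gamma R).IsAcyclic)) ∧
    (((Gamma R).Connected ∧ (Gamma R).IsAcyclic) ↔
      (∃ c : GammaVert R, (∃ v : GammaVert R, v ≠ c) ∧
        (∀ v : GammaVert R, v ≠ c → (Gamma R).Adj c v) ∧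
        ∀ u v : GammaVert R, u ≠ c → v ≠ c → ¬(Gamma R).Adj u v)) ∧
    ((∃ c : GammaVert R, (∃ v : GammaVert R, v ≠ c) ∧
        (∀ v : GammaVert R, v ≠ c → (Gamma R).Adj c v) ∧
        ∀ u v : GammaVert R, u ≠ c → v ≠ c → ¬(Gamma R).Adj u v) ↔
      (∃ (F : Type u) (_ : Field F), Nonempty (R ≃+* (ZMod 2 × F)))) := by
  classical
  -- the four conditions
  have hBtoUniv := fun (hb : (Gamma R).Connected ∧ (Gamma R).IsAcyclic) =>
    GammaAux.exists_universal hb.2 hb.1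
  have hAD : ((∃ a b : GammaVert R, a ≠ b) ∧
      ∃ c : GammaVert R, ∀ v : GammaVert R, v ≠ c → (Gamma R).Adj c v) →
      (∃ (F : Type u) (_ : Field F), Nonempty (R ≃+* (ZMod 2 × F))) := by
    rintro ⟨-, c, hc⟩
    exact GammaAux.universal_to_iso c hc
  have hDC : (∃ (F : Type u) (_ : Field F), Nonempty (R ≃+* (ZMod 2 × F))) →
      (∃ c : GammaVert R, (∃ v : GammaVert R, v ≠ c) ∧
        (∀ v : GammaVert R, v ≠ c → (Gamma R).Adj c v) ∧
        ∀ u v : GammaVert R, u ≠ c → v ≠ c → ¬(Gamma R).Adj u v) := by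
    rintro ⟨F, fld, ⟨φ⟩⟩
    letI := fld
    exact GammaAux.iso_to_star F φ
  have hCB : (∃ c : GammaVert R, (∃ v : GammaVert R, v ≠ c) ∧
        (∀ v : GammaVert R, v ≠ c → (Gamma R).Adj c v) ∧
        ∀ u v : GammaVert R, u ≠ c → v ≠ c → ¬(Gamma R).Adj u v) →
      ((Gamma R).Connected ∧ (Gamma R).IsAcyclic) := by
    rintro ⟨c, -, hstar, hind⟩
    exact ⟨GammaAux.star_connected hstar, GammaAux.star_acyclic hind⟩
  have hCA : (∃ c : GammaVert R, (∃ v : GammaVert R, v ≠ c) ∧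
        (∀ v : GammaVert R, v ≠ c → (Gamma R).Adj c v) ∧
        ∀ u v : GammaVert R, u ≠ c → v ≠ c → ¬(Gamma R).Adj u v) →
      ((∃ a b : GammaVert R, a ≠ b) ∧
        ∃ c : GammaVert R, ∀ v : GammaVert R, v ≠ c → (Gamma R).Adj c v) := by
    rintro ⟨c, ⟨v, hv⟩, hstar, -⟩
    exact ⟨⟨v, c, hv⟩, c, hstar⟩
  have hBA : ((Gamma R).Connected ∧ (Gamma R).IsAcyclic) →
      ((∃ a b : GammaVert R, a ≠ b) ∧
        ∃ c : GammaVert R, ∀ v : GammaVert R, v ≠ c → (Gamma R).Adj c v) := by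
    intro hb
    obtain ⟨c, ⟨d, hd⟩, huniv⟩ := hBtoUniv hb
    exact ⟨⟨d, c, hd⟩, c, huniv⟩
  refine ⟨⟨fun ha => hCB (hDC (hAD ha)), hBA⟩,
    ⟨fun hb => hDC (hAD (hBA hb)), hCB⟩,
    ⟨fun hc => hAD (hCA hc), hDC⟩⟩
end

section
/- Let R be a commutative ring with identity and let a, x, b be pairwise distinct vertices of Γ(R) such that a is adjacent to x and x is adjacent to b. If a·b + x is not a unit of R, then a·b + x is a vertex of Γ(R) (i.e., a·b + x ∉ U(R) ∪ J(R)), a·b + x is distinct from a, x and b, and a·b + x is adjacent to both a and b in Γ(R). -/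
universe u

/-- Lemma 3.7: given a path `a - x - b` in `Γ(R)` with `a`, `x`, `b` pairwise distinct,
if `a*b + x` is not a unit then it is a vertex of `Γ(R)`, distinct from `a`, `x`, `b`,
and adjacent to both `a` and `b`. -/
theorem gamma_path_extension {R : Type*} [CommRing R] (a x b : GammaVert R)
    (hax : (Gamma R).Adj a x) (hxb : (Gamma R).Adj x b) (hab : a ≠ b)
    (h : ¬IsUnit (a.1 * b.1 + x.1)) :
    (¬IsUnit (a.1 * b.1 + x.1) ∧ a.1 * b.1 + x.1 ∉ (⊥ : Ideal R).jacobson) ∧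
    a.1 * b.1 + x.1 ≠ a.1 ∧ a.1 * b.1 + x.1 ≠ x.1 ∧ a.1 * b.1 + x.1 ≠ b.1 ∧
    ∃ w : GammaVert R, w.1 = a.1 * b.1 + x.1 ∧
      (Gamma R).Adj w a ∧ (Gamma R).Adj w b := by
  obtain ⟨u, v, huv⟩ := (Ideal.isCoprime_span_singleton_iff a.1 x.1).mp
    (Ideal.isCoprime_iff_sup_eq.mpr hax.2)
  obtain ⟨s, t, hst⟩ := (Ideal.isCoprime_span_singleton_iff x.1 b.1).mp
    (Ideal.isCoprime_iff_sup_eq.mpr hxb.2)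
  have hwa : IsCoprime (a.1 * b.1 + x.1) a.1 :=
    ⟨v, u - v * b.1, by linear_combination huv⟩
  have hwb : IsCoprime (a.1 * b.1 + x.1) b.1 :=
    ⟨s, t - s * a.1, by linear_combination hst⟩
  have hja : a.1 * b.1 + x.1 ∉ (⊥ : Ideal R).jacobson := by
    intro hj
    obtain ⟨c, d, hcd⟩ := hwa
    have hu : IsUnit (d * a.1) := by
      have h2 := Ideal.mem_jacobson_bot.mp hj (-c)
      rwa [show (a.1 * b.1 + x.1) * (-c) + 1 = d * a.1 by linear_combination -hcd] at h2
    exact a.2.1 (isUnit_of_mul_isUnit_right hu)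
  have hne_a : a.1 * b.1 + x.1 ≠ a.1 := fun he =>
    a.2.1 (IsUnit.of_mul_eq_one (a := a.1) (u + v * (1 - b.1)) (by linear_combination huv - v * he))
  have hne_b : a.1 * b.1 + x.1 ≠ b.1 := fun he =>
    b.2.1 (IsUnit.of_mul_eq_one (a := b.1) (t + s * (1 - a.1)) (by linear_combination hst - s * he))
  have hne_x : a.1 * b.1 + x.1 ≠ x.1 := by
    intro he
    have hab0 : a.1 * b.1 = 0 := by linear_combination he
    exact x.2.1 (IsUnit.of_mul_eq_one (a := x.1) (u * a.1 * s + v * s * x.1 + v * t * b.1)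
      (by linear_combination (s * x.1 + t * b.1) * huv + hst - u * t * hab0))
  exact ⟨⟨h, hja⟩, hne_a, hne_x, hne_b, ⟨a.1 * b.1 + x.1, h, hja⟩, rfl,
    ⟨fun he => hne_a (congrArg Subtype.val he),
      Ideal.isCoprime_iff_sup_eq.mp ((Ideal.isCoprime_span_singleton_iff _ _).mpr hwa)⟩,
    ⟨fun he => hne_b (congrArg Subtype.val he),
      Ideal.isCoprime_iff_sup_eq.mp ((Ideal.isCoprime_span_singleton_iff _ _).mpr hwb)⟩⟩
end

section
/- Let R be a commutative ring with identity. If a vertex x of the graph Γ(R) lies on a cycle of length five in Γ(R), then x lies on a cycle of length three or on a cycle of length four in Γ(R). -/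
universe u

open SimpleGraph

lemma comax_iff {R : Type*} [CommRing R] (a b : R) :
    Ideal.span {a} ⊔ Ideal.span {b} = ⊤ ↔ ∃ u v : R, u*a + v*b = 1 := by
  rw [← Ideal.span_insert, Ideal.eq_top_iff_one, Ideal.mem_span_pair]

lemma tri_cycle {V : Type*} {G : SimpleGraph V} {x p q : V}
    (h1 : G.Adj x p) (h2 : G.Adj p q) (h3 : G.Adj q x) :
    ∃ c : G.Walk x x, c.IsCycle ∧ c.length = 3 := by
  refine ⟨Walk.cons h1 (Walk.cons h2 (Walk.cons h3 Walk.nil)), ?_, rfl⟩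
  rw [Walk.isCycle_def]
  refine ⟨?_, by simp, ?_⟩
  · rw [Walk.isTrail_def]
    simp [Sym2.eq_iff, h1.ne, h2.ne, h3.ne, h1.ne', h2.ne', h3.ne']
  · simp [h2.ne, h3.ne, h1.ne', h3.ne']

lemma quad_cycle {V : Type*} {G : SimpleGraph V} {x p q r : V}
    (h1 : G.Adj x p) (h2 : G.Adj p q) (h3 : G.Adj q r) (h4 : G.Adj r x)
    (hpr : p ≠ r) (hxq : x ≠ q) :
    ∃ c : G.Walk x x, c.IsCycle ∧ c.length = 4 := by
  refine ⟨Walk.cons h1 (Walk.cons h2 (Walk.cons h3 (Walk.cons h4 Walk.nil))), ?_, rfl⟩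
  rw [Walk.isCycle_def]
  refine ⟨?_, by simp, ?_⟩
  · rw [Walk.isTrail_def]
    simp [Sym2.eq_iff, h1.ne, h2.ne, h3.ne, h4.ne, h1.ne', h2.ne', h3.ne', h4.ne', hpr, hxq, hpr.symm, hxq.symm]
  · simp [h2.ne, h3.ne, h4.ne, h1.ne', hpr, hxq.symm]


/-- Lemma 3.8: if a vertex `x` of `Γ(R)` lies on a cycle of length five, then it lies
on a triangle or on a rectangle. -/
theorem gamma_five_cycle {R : Type*} [CommRing R] (x : GammaVert R)
    (h : ∃ c : (Gamma R).Walk x x, c.IsCycle ∧ c.length = 5) :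
    ∃ c : (Gamma R).Walk x x, c.IsCycle ∧ (c.length = 3 ∨ c.length = 4) := by
  obtain ⟨c, hc, hlen⟩ := h
  have hnd := hc.2
  by_contra hno
  push_neg at hno
  cases c with
  | nil => simp at hlen
  | cons h1 p =>
  rename_i b1
  cases p with
  | nil => simp at hlen
  | cons h2 p =>
  rename_i b2
  cases p with
  | nil => simp at hlen
  | cons h3 p =>
  rename_i b3
  cases p with
  | nil => simp at hlen
  | cons h4 p =>
  rename_i b4
  cases p with
  | nil => simp at hlen
  | cons h5 p =>
  rename_i b5
  cases p with
  | cons h6 p => simp [SimpleGraph.Walk.length_cons] at hlen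
  | nil =>
  clear hlen hc
  simp only [SimpleGraph.Walk.support_cons, SimpleGraph.Walk.support_nil,
    List.tail_cons, List.nodup_cons, List.mem_cons, List.mem_singleton,
    List.not_mem_nil, or_false, List.nodup_nil, and_true] at hnd
  push_neg at hnd
  obtain ⟨⟨hb12, hb13, hb14, hb1x⟩, ⟨hb23, hb24, hb2x⟩, ⟨hb34, hb3x⟩, hb4x⟩ := hnd
  have P3 : ∀ p q : GammaVert R, (Gamma R).Adj x p → (Gamma R).Adj p q →
      (Gamma R).Adj q x → False := by
    intro p q a1 a2 a3
    obtain ⟨c', hc', hl'⟩ := tri_cycle a1 a2 a3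
    exact (hno c' hc').1 hl'
  have P4 : ∀ p q r : GammaVert R, (Gamma R).Adj x p → (Gamma R).Adj p q →
      (Gamma R).Adj q r → (Gamma R).Adj r x → p ≠ r → x ≠ q → False := by
    intro p q r a1 a2 a3 a4 hpr hxq
    obtain ⟨c', hc', hl'⟩ := quad_cycle a1 a2 a3 a4 hpr hxq
    exact (hno c' hc').2 hl'
  set e := x.1 with he
  obtain ⟨hxu, hxj⟩ := x.2
  have c12 : ∃ u v : R, u * e + v * b1.1 = 1 := (comax_iff _ _).1 h1.2
  have c34 : ∃ u v : R, u * b2.1 + v * b3.1 = 1 := (comax_iff _ _).1 h3.2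
  have c51 : ∃ u v : R, u * b4.1 + v * e = 1 := (comax_iff _ _).1 h5.2
  have hb1u : ¬ IsUnit b1.1 := b1.2.1
  have hb4u : ¬ IsUnit b4.1 := b4.2.1
  -- no chords x-b2, x-b3
  have nc13 : ¬ ∃ u v : R, u * e + v * b2.1 = 1 := by
    intro hcm
    exact P3 b1 b2 h1 h2 ⟨hb2x, by rw [sup_comm]; exact (comax_iff _ _).2 hcm⟩
  have nc14 : ¬ ∃ u v : R, u * e + v * b3.1 = 1 := by
    intro hcm
    exact P3 b3 b4 ⟨fun hh => hb3x hh.symm, (comax_iff _ _).2 hcm⟩ h4 h5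
  -- Step A: any nonunit comaximal with b1 and b4 equals e
  have keyA : ∀ w : R, ¬ IsUnit w → (∃ u v : R, u * w + v * b1.1 = 1) →
      (∃ u v : R, u * w + v * b4.1 = 1) → w = e := by
    intro w hwu hw1 hw4
    obtain ⟨u1, v1, h1'⟩ := hw1
    obtain ⟨u4, v4, h4'⟩ := hw4
    have hwj : w ∉ (⊥ : Ideal R).jacobson := by
      intro hmem
      rw [Ideal.mem_jacobson_bot] at hmem
      have hu := hmem (-u1)
      have heq : w * (-u1) + 1 = v1 * b1.1 := by linear_combination -h1'
      rw [heq] at hu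
      exact hb1u (isUnit_of_mul_isUnit_right hu)
    set w' : GammaVert R := ⟨w, hwu, hwj⟩ with hw'
    by_contra hwe
    have hw'x : x ≠ w' := fun hh => hwe (congrArg Subtype.val hh).symm
    have a2 : (Gamma R).Adj b1 w' := by
      refine ⟨fun hh => ?_, by rw [sup_comm]; exact (comax_iff _ _).2 ⟨u1, v1, h1'⟩⟩
      have hbw : b1.1 = w := congrArg Subtype.val hh
      exact hb1u (IsUnit.of_mul_eq_one (u1 + v1)
        (by linear_combination h1' + u1 * hbw))
    have a3 : (Gamma R).Adj w' b4 := by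
      refine ⟨fun hh => ?_, (comax_iff _ _).2 ⟨u4, v4, h4'⟩⟩
      have hbw : w = b4.1 := congrArg Subtype.val hh
      exact hb4u (IsUnit.of_mul_eq_one (u4 + v4)
        (by linear_combination h4' - u4 * hbw))
    exact P4 b1 w' b4 h1 a2 a3 h5 hb14 hw'x
  -- Step B: e is idempotent
  have hee : e * e = e := by
    refine keyA (e * e) (fun hu => hxu (isUnit_of_mul_isUnit_left hu)) ?_ ?_
    · obtain ⟨u, v, huv⟩ := c12
      exact ⟨u * u, 2 * u * e * v + v * v * b1.1,
        by linear_combination (u * e + v * b1.1 + 1) * huv⟩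
    · obtain ⟨u, v, huv⟩ := c51
      exact ⟨v * v, 2 * v * e * u + u * u * b4.1,
        by linear_combination (u * b4.1 + v * e + 1) * huv⟩
  -- Step C
  have keyC : ∀ r : R, ¬ IsUnit (e + r * (1 - e)) → r * (1 - e) = 0 := by
    intro r hru
    have hmul : e * (e + r * (1 - e)) = e := by linear_combination (1 - r) * hee
    have hth := keyA (e + r * (1 - e)) hru ?_ ?_
    · linear_combination hth
    · obtain ⟨u, v, huv⟩ := c12
      exact ⟨u * e, v, by linear_combination u * hmul + huv⟩
    · obtain ⟨u, v, huv⟩ := c51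
      exact ⟨v * e, u, by linear_combination v * hmul + huv⟩
  -- Step D
  have hzb2 : b2.1 * (1 - e) = 0 := by
    by_cases hu : IsUnit (e + b2.1 * (1 - e))
    · exfalso
      obtain ⟨uu, huu⟩ := hu
      have hinv : (↑uu⁻¹ : R) * (e + b2.1 * (1 - e)) = 1 := by
        rw [← huu]; exact Units.inv_mul uu
      exact nc13 ⟨(↑uu⁻¹ : R) * (1 - b2.1), (↑uu⁻¹ : R), by linear_combination hinv⟩
    · exact keyC _ hu
  have hzb3 : b3.1 * (1 - e) = 0 := by
    by_cases hu : IsUnit (e + b3.1 * (1 - e))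
    · exfalso
      obtain ⟨uu, huu⟩ := hu
      have hinv : (↑uu⁻¹ : R) * (e + b3.1 * (1 - e)) = 1 := by
        rw [← huu]; exact Units.inv_mul uu
      exact nc14 ⟨(↑uu⁻¹ : R) * (1 - b3.1), (↑uu⁻¹ : R), by linear_combination hinv⟩
    · exact keyC _ hu
  obtain ⟨u, v, huv⟩ := c34
  have he1 : e = 1 := by linear_combination (1 - e) * huv - u * hzb2 - v * hzb3
  exact hxu (show IsUnit e by rw [he1]; exact isUnit_one)
end

section
/- Let R be a commutative ring with identity. If a vertex x of the graph Γ(R) lies on some cycle of Γ(R), then x lies on a cycle of length n with 3 ≤ n ≤ 5 in Γ(R). -/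
universe u

open SimpleGraph

section GraphHelpers

variable {V : Type*} {G : SimpleGraph V}

lemma getVert_eq_support_getElem {u v : V} (p : G.Walk u v) :
    ∀ (i : ℕ) (hi : i < p.support.length), p.getVert i = p.support[i] := by
  induction p with
  | nil => intro i hi; simp [Walk.support_nil] at hi; subst hi; simp
  | cons h q ih =>
    intro i hi
    cases i with
    | zero => simp
    | succ n =>
      simp only [Walk.getVert_cons_succ, Walk.support_cons, List.getElem_cons_succ]
      exact ih n (by simpa [Walk.length_support] using hi)

lemma cycle_getVert_inj {x : V} {c : G.Walk x x} (hc : c.IsCycle) {i j : ℕ}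
    (hi1 : 1 ≤ i) (hi2 : i ≤ c.length) (hj1 : 1 ≤ j) (hj2 : j ≤ c.length)
    (hij : c.getVert i = c.getVert j) : i = j := by
  have hlen : c.support.length = c.length + 1 := c.length_support
  have h1 : c.getVert i = c.support.tail[i-1]'(by simp [List.length_tail, hlen]; omega) := by
    rw [List.getElem_tail]
    rw [getVert_eq_support_getElem c i (by omega)]
    congr 1
    omega
  have h2 : c.getVert j = c.support.tail[j-1]'(by simp [List.length_tail, hlen]; omega) := by
    rw [List.getElem_tail]
    rw [getVert_eq_support_getElem c j (by omega)]
    congr 1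
    omega
  rw [h1, h2] at hij
  have := (hc.support_nodup.getElem_inj_iff).mp hij
  omega

lemma exists_cycle_three {x a b : V} (h1 : G.Adj x a) (h2 : G.Adj a b) (h3 : G.Adj b x) :
    ∃ c : G.Walk x x, c.IsCycle ∧ c.length = 3 := by
  refine ⟨Walk.cons h1 (Walk.cons h2 (Walk.cons h3 Walk.nil)), ?_, rfl⟩
  have hxa := h1.ne
  have hab := h2.ne
  have hbx := h3.ne
  rw [Walk.isCycle_def, Walk.isTrail_def]
  refine ⟨?_, by simp, ?_⟩
  · simp [Sym2.eq_iff]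
    tauto
  · simp [List.nodup_cons]
    tauto

lemma exists_cycle_four {x a t b : V} (h1 : G.Adj x a) (h2 : G.Adj a t) (h3 : G.Adj t b)
    (h4 : G.Adj b x) (hxt : x ≠ t) (hab : a ≠ b) :
    ∃ c : G.Walk x x, c.IsCycle ∧ c.length = 4 := by
  refine ⟨Walk.cons h1 (Walk.cons h2 (Walk.cons h3 (Walk.cons h4 Walk.nil))), ?_, rfl⟩
  have hxa := h1.ne
  have hat := h2.ne
  have htb := h3.ne
  have hbx := h4.ne
  rw [Walk.isCycle_def, Walk.isTrail_def]
  refine ⟨?_, by simp, ?_⟩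
  · simp [Sym2.eq_iff]
    tauto
  · simp [List.nodup_cons]
    tauto

end GraphHelpers

section RingHelpers

variable {R : Type*} [CommRing R]

lemma adj_isCoprime {a b : GammaVert R} (h : (Gamma R).Adj a b) : IsCoprime a.1 b.1 := by
  rw [← Ideal.isCoprime_span_singleton_iff, Ideal.isCoprime_iff_sup_eq]
  exact h.2

lemma adj_of_isCoprime {a b : GammaVert R} (hne : a ≠ b) (h : IsCoprime a.1 b.1) :
    (Gamma R).Adj a b :=
  ⟨hne, Ideal.isCoprime_iff_sup_eq.mp ((Ideal.isCoprime_span_singleton_iff _ _).mpr h)⟩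

lemma notMem_jacobson_of_isCoprime {t a : R} (h : IsCoprime t a) (ha : ¬IsUnit a) :
    t ∉ (⊥ : Ideal R).jacobson := by
  intro ht
  obtain ⟨u, v, huv⟩ := h
  apply ha
  have h2 : IsUnit (t * (-u) + 1) := Ideal.mem_jacobson_bot.mp ht (-u)
  have h3 : v * a = t * (-u) + 1 := by linear_combination huv
  rw [← h3] at h2
  exact isUnit_of_mul_isUnit_right h2

end RingHelpers

/-- Lemma 3.9: if a vertex `x` of `Γ(R)` lies on some cycle, then it lies on a cycle of
length `n` with `3 ≤ n ≤ 5`. -/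
theorem gamma_cycle_short {R : Type*} [CommRing R] (x : GammaVert R)
    (h : ∃ c : (Gamma R).Walk x x, c.IsCycle) :
    ∃ c : (Gamma R).Walk x x, c.IsCycle ∧ 3 ≤ c.length ∧ c.length ≤ 5 := by
  classical
  obtain ⟨c, hc⟩ := h
  have h3 := hc.three_le_length
  rcases le_or_gt c.length 5 with h5 | h6
  · exact ⟨c, hc, h3, h5⟩
  · -- long cycle: extract second, third and last-but-one vertices
    set n := c.length with hn
    have hn6 : 6 ≤ n := h6
    set A := c.getVert 1 with hA
    set W := c.getVert 2 with hW
    set B := c.getVert (n - 1) with hB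
    have hgx : c.getVert n = x := c.getVert_length
    have hg0 : c.getVert 0 = x := c.getVert_zero
    -- adjacencies
    have hxA : (Gamma R).Adj x A := by
      have := c.adj_getVert_succ (i := 0) (by omega)
      rwa [hg0] at this
    have hAW : (Gamma R).Adj A W := c.adj_getVert_succ (i := 1) (by omega)
    have hBx : (Gamma R).Adj B x := by
      have := c.adj_getVert_succ (i := n - 1) (by omega)
      rw [show n - 1 + 1 = n by omega, hgx] at this
      exact this
    -- distinctness
    have inj := fun {i j : ℕ} hi1 hi2 hj1 hj2 hij =>
      cycle_getVert_inj (i := i) (j := j) hc hi1 hi2 hj1 hj2 hij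
    have hxW : x ≠ W := by
      intro hxw
      have : n = 2 := inj (by omega) (by omega) (by omega) (by omega) (by rw [hgx]; exact hxw)
      omega
    have hxB : x ≠ B := by
      intro hxb
      have : n = n - 1 := inj (by omega) (by omega) (by omega) (by omega) (by rw [hgx]; exact hxb)
      omega
    have hAB : A ≠ B := by
      intro hab
      have : 1 = n - 1 := inj (by omega) (by omega) (by omega) (by omega) hab
      omega
    have hWB : W ≠ B := by
      intro hwb
      have : 2 = n - 1 := inj (by omega) (by omega) (by omega) (by omega) hwb
      omega
    -- coprimality facts
    have cxA : IsCoprime x.1 A.1 := adj_isCoprime hxA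
    have cAW : IsCoprime A.1 W.1 := adj_isCoprime hAW
    have cBx : IsCoprime B.1 x.1 := adj_isCoprime hBx
    by_cases hsq : x.1 * x.1 = x.1
    · by_cases hU : IsUnit (x.1 * W.1 + (1 - x.1))
      · -- Q: W divides x, so W is adjacent to B, giving a 4-cycle x-A-W-B-x
        obtain ⟨u, hu⟩ := hU
        have hWx : W.1 ∣ x.1 := by
          refine ⟨x.1 * ↑u⁻¹, ?_⟩
          have h1 : x.1 * (u : R) = W.1 * x.1 := by
            rw [hu]; linear_combination (W.1 - 1) * hsq
          have h2 : x.1 * (u : R) * ↑u⁻¹ = W.1 * x.1 * ↑u⁻¹ := by rw [h1]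
          rwa [mul_assoc, u.mul_inv, mul_one, mul_assoc] at h2
        have cWB : IsCoprime W.1 B.1 := (cBx.symm).of_isCoprime_of_dvd_left hWx
        obtain ⟨c4, hc4, hlen4⟩ :=
          exists_cycle_four hxA hAW (adj_of_isCoprime hWB cWB) hBx hxW hAB
        exact ⟨c4, hc4, by omega, by omega⟩
      · -- P: t = x*W + (1-x) gives a triangle x-A-t-x
        set t : R := x.1 * W.1 + (1 - x.1) with ht
        have ctx : IsCoprime t x.1 := ⟨1, 1 - W.1, by rw [ht]; ring⟩
        obtain ⟨α, β, hαβ⟩ := cAW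
        obtain ⟨γ, δ, hγδ⟩ := cxA
        have ctA : IsCoprime t A.1 := by
          refine ⟨γ * β * x.1, γ * α * x.1 + δ, ?_⟩
          rw [ht]
          linear_combination (γ * x.1) * hαβ + hγδ + (γ * β * W.1 - γ * β) * hsq
        have htJ : t ∉ (⊥ : Ideal R).jacobson :=
          notMem_jacobson_of_isCoprime ctx x.2.1
        set tv : GammaVert R := ⟨t, hU, htJ⟩ with htv
        have htx : tv ≠ x := by
          intro hh
          have h1 : t = x.1 := congrArg Subtype.val hh
          apply x.2.1
          have hx1 : x.1 = 1 := by linear_combination (x.1 - 1) * h1 + (2 - W.1) * hsq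
          rw [hx1]; exact isUnit_one
        have htA : A ≠ tv := by
          intro hh
          apply A.2.1
          have h1 : t = A.1 := congrArg Subtype.val hh.symm
          rw [h1] at ctA
          exact isCoprime_self.mp ctA
        obtain ⟨c3, hc3, hlen3⟩ :=
          exists_cycle_three hxA (adj_of_isCoprime htA ctA.symm) (adj_of_isCoprime htx ctx)
        exact ⟨c3, hc3, by omega, by omega⟩
    · -- x² ≠ x : t = x² gives a 4-cycle x-A-t-B-x
      have cxB : IsCoprime x.1 B.1 := cBx.symm
      have ctA : IsCoprime (x.1 * x.1) A.1 := cxA.mul_left cxA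
      have ctB : IsCoprime (x.1 * x.1) B.1 := cxB.mul_left cxB
      have hnu : ¬IsUnit (x.1 * x.1) := fun hh => x.2.1 (isUnit_of_mul_isUnit_left hh)
      have htJ : x.1 * x.1 ∉ (⊥ : Ideal R).jacobson :=
        notMem_jacobson_of_isCoprime ctA A.2.1
      set tv : GammaVert R := ⟨x.1 * x.1, hnu, htJ⟩ with htv
      have htx : x ≠ tv := by
        intro hh
        exact hsq (congrArg Subtype.val hh).symm
      have htA : A ≠ tv := by
        intro hh
        apply x.2.1
        have h1 : A.1 = x.1 * x.1 := congrArg Subtype.val hh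
        exact cxA.isUnit_of_dvd' ⟨1, (mul_one _).symm⟩ ⟨x.1, by rw [h1]⟩
      have htB : tv ≠ B := by
        intro hh
        apply x.2.1
        have h1 : B.1 = x.1 * x.1 := congrArg Subtype.val hh.symm
        exact cxB.isUnit_of_dvd' ⟨1, (mul_one _).symm⟩ ⟨x.1, by rw [h1]⟩
      obtain ⟨c4, hc4, hlen4⟩ :=
        exists_cycle_four hxA (adj_of_isCoprime htA ctA.symm)
          (adj_of_isCoprime htB ctB) hBx htx hAB
      exact ⟨c4, hc4, by omega, by omega⟩
end

section
/- Let R be a commutative ring with identity such that the graph Γ(R) contains a cycle. Then: (1) every vertex of Γ(R) that lies on some cycle of Γ(R) lies on a cycle of length three or on a cycle of length four (the core of Γ(R) is a union of triangles and rectangles); (2) every vertex of Γ(R) either has degree one (is an end vertex) or lies on some cycle of Γ(R). -/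
universe u

open SimpleGraph Walk

section Graph
variable {V : Type*} {G : SimpleGraph V}

lemma cycle3 {a b c : V} (h1 : G.Adj a b) (h2 : G.Adj b c) (h3 : G.Adj c a) :
    ∃ w : G.Walk a a, w.IsCycle ∧ w.length = 3 := by
  refine ⟨Walk.cons h1 (Walk.cons h2 (Walk.cons h3 Walk.nil)), ?_, rfl⟩
  simp [Walk.isCycle_def, Walk.isTrail_def, h1.ne, h2.ne, h3.ne, h1.ne', h2.ne', h3.ne',
    Sym2.eq, Sym2.rel_iff]

lemma cycle4 {a b c d : V} (h1 : G.Adj a b) (h2 : G.Adj b c) (h3 : G.Adj c d) (h4 : G.Adj d a)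
    (hac : a ≠ c) (hbd : b ≠ d) :
    ∃ w : G.Walk a a, w.IsCycle ∧ w.length = 4 := by
  refine ⟨Walk.cons h1 (Walk.cons h2 (Walk.cons h3 (Walk.cons h4 Walk.nil))), ?_, rfl⟩
  simp [Walk.isCycle_def, Walk.isTrail_def, h1.ne, h2.ne, h3.ne, h4.ne, h1.ne', h2.ne',
    h3.ne', h4.ne', hac, hbd, hac.symm, hbd.symm, Sym2.eq, Sym2.rel_iff]

lemma getVert_eq_support_getElem_s10 {u v : V} (w : G.Walk u v) {i : ℕ} (h : i ≤ w.length) :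
    w.getVert i = w.support[i]'(by simp [Walk.length_support]; omega) := by
  induction w generalizing i with
  | nil =>
    simp only [Walk.length_nil, Nat.le_zero] at h
    subst h; simp
  | cons hadj p ih =>
    cases i with
    | zero => simp
    | succ n =>
      simp only [Walk.support_cons, List.getElem_cons_succ, Walk.getVert_cons_succ]
      exact ih (by simpa [Nat.succ_le_succ_iff] using h)

lemma SimpleGraph.Walk.IsCycle.getVert_ne' {v : V} {c : G.Walk v v} (hc : c.IsCycle) {i j : ℕ}
    (hi : 1 ≤ i) (hij : i < j) (hj : j ≤ c.length) : c.getVert i ≠ c.getVert j := by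
  have hnd : c.support.tail.Nodup := hc.2
  have hs : c.support.length = c.length + 1 := c.length_support
  have hlen : c.support.tail.length = c.length := by simp [List.length_tail, hs]
  intro he
  have e1 : c.support[i]'(by omega) = c.support[j]'(by omega) := by
    rw [← getVert_eq_support_getElem_s10 c (by omega), ← getVert_eq_support_getElem_s10 c hj]
    exact he
  have e2 : c.support.tail[i-1]'(by omega) = c.support.tail[j-1]'(by omega) := by
    rw [List.getElem_tail, List.getElem_tail]
    convert e1 using 2 <;> omega
  have := (List.Nodup.getElem_inj_iff hnd).mp e2
  omega

end Graph

section Ring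
variable {R : Type*} [CommRing R]

lemma gamma_adj {a b : GammaVert R} :
    (Gamma R).Adj a b ↔ a ≠ b ∧ IsCoprime a.1 b.1 := by
  rw [show (Gamma R).Adj a b = (a ≠ b ∧ Ideal.span {a.1} ⊔ Ideal.span {b.1} = ⊤) from rfl,
      Ideal.sup_eq_top_iff_isCoprime]

lemma isUnit_of_isCoprime_jac {a b : R} (h : IsCoprime a b)
    (ha : a ∈ (⊥ : Ideal R).jacobson) : IsUnit b := by
  obtain ⟨u, v, huv⟩ := h
  have h1 : IsUnit (a * (-u) + 1) := Ideal.mem_jacobson_bot.mp ha (-u)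
  have h2 : v * b = a * (-u) + 1 := by linear_combination huv
  exact isUnit_of_mul_isUnit_right (h2 ▸ h1)

lemma mkVert {a b : R} (hb : ¬IsUnit b) (ha : ¬IsUnit a) (h : IsCoprime a b) :
    ¬IsUnit b ∧ b ∉ (⊥ : Ideal R).jacobson :=
  ⟨hb, fun hj => ha (isUnit_of_isCoprime_jac h.symm hj)⟩

lemma mkAdj {a b : GammaVert R} (h : IsCoprime a.1 b.1) : (Gamma R).Adj a b :=
  gamma_adj.mpr ⟨fun he => a.2.1 (isCoprime_self.mp (by rw [he] at h ⊢; exact h)), h⟩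

lemma exists_neighbor (x : GammaVert R) : ∃ y, (Gamma R).Adj x y := by
  have hx : ¬ ∀ t, IsUnit (x.1 * t + 1) := fun h => x.2.2 (Ideal.mem_jacobson_bot.mpr h)
  push_neg at hx
  obtain ⟨t, ht⟩ := hx
  have hcop : IsCoprime x.1 (x.1 * t + 1) := ⟨-t, 1, by ring⟩
  exact ⟨⟨x.1 * t + 1, mkVert ht x.2.1 hcop⟩, mkAdj hcop⟩

lemma star_of_no_small_cycle {x y z : GammaVert R}
    (hxy : (Gamma R).Adj x y) (hxz : (Gamma R).Adj x z) (hyz : y ≠ z)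
    (hno : ∀ c : (Gamma R).Walk x x, c.IsCycle → ¬(c.length = 3 ∨ c.length = 4)) :
    ∀ a b : GammaVert R, (Gamma R).Adj a b → a = x ∨ b = x := by
  obtain ⟨-, cxy⟩ := gamma_adj.mp hxy
  obtain ⟨-, cxz⟩ := gamma_adj.mp hxz
  set e : R := x.1 with he_def
  -- no triangle x-y-z, so y,z not coprime
  have hyz' : ¬IsCoprime y.1 z.1 := by
    intro hcop
    obtain ⟨c, hcy, hlen⟩ := cycle3 (G := Gamma R) hxy (mkAdj hcop) (mkAdj cxz.symm)
    exact hno c hcy (Or.inl hlen)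
  -- x is idempotent
  have hee : e * e = e := by
    by_contra hne
    have cwy : IsCoprime (e * e) y.1 := cxy.mul_left cxy
    have cwz : IsCoprime (e * e) z.1 := cxz.mul_left cxz
    have hnu : ¬IsUnit (e * e) := fun hu => x.2.1 (isUnit_of_mul_isUnit_left hu)
    have hxw : x ≠ (⟨e * e, mkVert hnu y.2.1 cwy.symm⟩ : GammaVert R) := by
      intro hq
      exact hne (congrArg Subtype.val hq).symm
    obtain ⟨c, hcy, hlen⟩ := cycle4 (G := Gamma R) hxy
      (mkAdj (a := y) (b := ⟨e * e, mkVert hnu y.2.1 cwy.symm⟩) cwy.symm)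
      (mkAdj (a := ⟨e * e, mkVert hnu y.2.1 cwy.symm⟩) (b := z) cwz) hxz.symm hxw hyz
    exact hno c hcy (Or.inr hlen)
  -- the rectangle-excluding hypothesis
  have hH1 : ∀ w : R, IsCoprime w y.1 → IsCoprime w z.1 → ¬IsUnit w → w = e := by
    intro w cwy cwz hnu
    by_contra hne
    have hxw : x ≠ (⟨w, mkVert hnu y.2.1 cwy.symm⟩ : GammaVert R) := by
      intro hq
      exact hne (congrArg Subtype.val hq).symm
    obtain ⟨c, hcy, hlen⟩ := cycle4 (G := Gamma R) hxy
      (mkAdj (a := y) (b := ⟨w, mkVert hnu y.2.1 cwy.symm⟩) cwy.symm)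
      (mkAdj (a := ⟨w, mkVert hnu y.2.1 cwy.symm⟩) (b := z) cwz) hxz.symm hxw hyz
    exact hno c hcy (Or.inr hlen)
  -- the triangle-excluding hypothesis
  have hH2 : ∀ n v : R, (¬IsUnit n ∧ n ∉ (⊥ : Ideal R).jacobson) → IsCoprime e n →
      IsCoprime v e → IsCoprime v n → IsUnit v := by
    intro n v hn cen cve cvn
    by_contra hnu
    obtain ⟨c, hcy, hlen⟩ := cycle3 (G := Gamma R)
      (mkAdj (a := x) (b := ⟨n, hn⟩) cen)
      (mkAdj (a := ⟨n, hn⟩) (b := ⟨v, mkVert hnu x.2.1 cve.symm⟩) cvn.symm)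
      (mkAdj (a := ⟨v, mkVert hnu x.2.1 cve.symm⟩) (b := x) cve)
    exact hno c hcy (Or.inl hlen)
  -- neighbours of x have e*n in the Jacobson radical
  have hJ : ∀ n : R, (¬IsUnit n ∧ n ∉ (⊥ : Ideal R).jacobson) → IsCoprime e n →
      e * n ∈ (⊥ : Ideal R).jacobson := by
    intro n hn cen
    rw [Ideal.mem_jacobson_bot]
    intro r
    have hu : IsUnit (1 + e * r * n) :=
      hH2 n (1 + e * r * n) hn cen ⟨1, -(r * n), by ring⟩ ⟨1, -(e * r), by ring⟩
    rwa [show e * n * r + 1 = 1 + e * r * n by ring]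
  -- D0 : second factor is a field
  have hD0 : ∀ t : R, (1 - e) * t = 0 ∨ ∃ v, v * ((1 - e) * t) = 1 - e := by
    intro t
    have hkey : e * (e + (1 - e) * t) = e := by linear_combination (1 - t) * hee
    have cwy : IsCoprime (e + (1 - e) * t) y.1 := by
      obtain ⟨p, q, hpq⟩ := cxy
      exact ⟨p * e, q, by rw [mul_assoc, hkey]; exact hpq⟩
    have cwz : IsCoprime (e + (1 - e) * t) z.1 := by
      obtain ⟨p, q, hpq⟩ := cxz
      exact ⟨p * e, q, by rw [mul_assoc, hkey]; exact hpq⟩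
    by_cases hu : IsUnit (e + (1 - e) * t)
    · right
      obtain ⟨v, hv⟩ := hu.exists_left_inv
      exact ⟨v, by linear_combination (1 - e) * hv + v * (1 - t) * hee⟩
    · left
      have := hH1 _ cwy cwz hu
      linear_combination this
  -- the star property
  intro a b hab
  obtain ⟨hne, cab⟩ := gamma_adj.mp hab
  obtain ⟨r, s, hrs⟩ := cab
  rcases hD0 a.1 with hA | ⟨vA, hvA⟩ <;> rcases hD0 b.1 with hB | ⟨vB, hvB⟩
  · -- both annihilated by f : impossible
    exfalso
    have hf0 : (1 : R) - e = 0 := by linear_combination -(1 - e) * hrs + r * hA + s * hB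
    have : IsUnit e := by rw [show e = 1 by linear_combination -hf0]; exact isUnit_one
    exact x.2.1 this
  · -- f*a = 0 : conclude a = x (or contradiction)
    have cBe : IsCoprime e b.1 := ⟨1, vB * (1 - e), by linear_combination hvB⟩
    have jB : e * b.1 ∈ (⊥ : Ideal R).jacobson := hJ b.1 b.2 cBe
    have hjj : e - e * r * a.1 ∈ (⊥ : Ideal R).jacobson := by
      rw [show e - e * r * a.1 = s * (e * b.1) by linear_combination (-e) * hrs]
      exact Ideal.mul_mem_left _ s jB
    have hu : IsUnit ((1 - e) + e * r * a.1) := by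
      have := Ideal.mem_jacobson_bot.mp hjj (-1)
      rwa [show (e - e * r * a.1) * (-1) + 1 = (1 - e) + e * r * a.1 by ring] at this
    obtain ⟨v, hv⟩ := hu.exists_left_inv
    have hc : (v * r * e) * a.1 = e := by
      linear_combination e * hv + v * (1 - r * a.1) * hee
    by_cases hax : a = x
    · exact Or.inl hax
    · exfalso
      obtain ⟨p, q, hpq⟩ := cxy
      have cay : IsCoprime a.1 y.1 := ⟨p * (v * r * e), q, by linear_combination hpq + p * hc⟩
      obtain ⟨p', q', hpq'⟩ := cxz
      have caz : IsCoprime a.1 z.1 := ⟨p' * (v * r * e), q', by linear_combination hpq' + p' * hc⟩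
      exact hax (Subtype.ext (hH1 a.1 cay caz a.2.1))
  · -- f*b = 0 : conclude b = x (or contradiction)
    have cAe : IsCoprime e a.1 := ⟨1, vA * (1 - e), by linear_combination hvA⟩
    have jA : e * a.1 ∈ (⊥ : Ideal R).jacobson := hJ a.1 a.2 cAe
    have hjj : e - e * s * b.1 ∈ (⊥ : Ideal R).jacobson := by
      rw [show e - e * s * b.1 = r * (e * a.1) by linear_combination (-e) * hrs]
      exact Ideal.mul_mem_left _ r jA
    have hu : IsUnit ((1 - e) + e * s * b.1) := by
      have := Ideal.mem_jacobson_bot.mp hjj (-1)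
      rwa [show (e - e * s * b.1) * (-1) + 1 = (1 - e) + e * s * b.1 by ring] at this
    obtain ⟨v, hv⟩ := hu.exists_left_inv
    have hc : (v * s * e) * b.1 = e := by
      linear_combination e * hv + v * (1 - s * b.1) * hee
    by_cases hbx : b = x
    · exact Or.inr hbx
    · exfalso
      obtain ⟨p, q, hpq⟩ := cxy
      have cby : IsCoprime b.1 y.1 := ⟨p * (v * s * e), q, by linear_combination hpq + p * hc⟩
      obtain ⟨p', q', hpq'⟩ := cxz
      have cbz : IsCoprime b.1 z.1 := ⟨p' * (v * s * e), q', by linear_combination hpq' + p' * hc⟩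
      exact hbx (Subtype.ext (hH1 b.1 cby cbz b.2.1))
  · -- both coprime to e : e lands in the Jacobson radical, contradiction
    exfalso
    have cAe : IsCoprime e a.1 := ⟨1, vA * (1 - e), by linear_combination hvA⟩
    have cBe : IsCoprime e b.1 := ⟨1, vB * (1 - e), by linear_combination hvB⟩
    have jA : e * a.1 ∈ (⊥ : Ideal R).jacobson := hJ a.1 a.2 cAe
    have jB : e * b.1 ∈ (⊥ : Ideal R).jacobson := hJ b.1 b.2 cBe
    have : e ∈ (⊥ : Ideal R).jacobson := by
      rw [show e = r * (e * a.1) + s * (e * b.1) by linear_combination (-e) * hrs]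
      exact Ideal.add_mem _ (Ideal.mul_mem_left _ r jA) (Ideal.mul_mem_left _ s jB)
    exact x.2.2 this

end Ring

/-- Theorem 3.10: if `Γ(R)` contains a cycle, then every vertex on a cycle lies on a
triangle or a rectangle (the core is a union of triangles and rectangles), and every
vertex is an end vertex (has exactly one neighbour) or lies on some cycle. -/
theorem gamma_core_structure {R : Type*} [CommRing R]
    (h : ∃ (v : GammaVert R) (c : (Gamma R).Walk v v), c.IsCycle) :
    (∀ x : GammaVert R, (∃ c : (Gamma R).Walk x x, c.IsCycle) →
      ∃ c : (Gamma R).Walk x x, c.IsCycle ∧ (c.length = 3 ∨ c.length = 4)) ∧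
    (∀ x : GammaVert R,
      (∃! y : GammaVert R, (Gamma R).Adj x y) ∨
      ∃ c : (Gamma R).Walk x x, c.IsCycle) := by
  constructor
  · -- Part 1
    rintro x ⟨c, hc⟩
    by_contra hno'
    push_neg at hno'
    have hno : ∀ c : (Gamma R).Walk x x, c.IsCycle → ¬(c.length = 3 ∨ c.length = 4) := by
      intro c' hc' hor
      rcases hor with h3 | h4
      · exact (hno' c' hc').1 h3
      · exact (hno' c' hc').2 h4
    have h3 := hc.three_le_length
    rcases (by omega : c.length = 3 ∨ c.length = 4 ∨ 5 ≤ c.length) with hl | hl | hl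
    · exact hno c hc (Or.inl hl) 
    · exact hno c hc (Or.inr hl)
    · -- length ≥ 5
      have hxy : (Gamma R).Adj x (c.getVert 1) := by
        have := c.adj_getVert_succ (i := 0) (by omega)
        simpa [c.getVert_zero] using this
      have hzx : (Gamma R).Adj (c.getVert (c.length - 1)) x := by
        have := c.adj_getVert_succ (i := c.length - 1) (by omega)
        rw [show c.length - 1 + 1 = c.length by omega, c.getVert_length] at this
        exact this
      have hyz : c.getVert 1 ≠ c.getVert (c.length - 1) :=
        hc.getVert_ne' (by omega) (by omega) (by omega)
      have hS := star_of_no_small_cycle hxy hzx.symm hyz hno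
      have e12 := c.adj_getVert_succ (i := 1) (by omega)
      rcases hS _ _ e12 with h1 | h2
      · exact hxy.ne h1.symm
      · have hne := hc.getVert_ne' (i := 2) (j := c.length) (by omega) (by omega) le_rfl
        exact hne (h2.trans c.getVert_length.symm)
  · -- Part 2
    intro x
    by_cases hcyc : ∃ c : (Gamma R).Walk x x, c.IsCycle
    · exact Or.inr hcyc
    · left
      obtain ⟨y, hy⟩ := exists_neighbor x
      refine ⟨y, hy, ?_⟩
      intro z hz
      by_contra hne
      have hno : ∀ c : (Gamma R).Walk x x, c.IsCycle → ¬(c.length = 3 ∨ c.length = 4) :=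
        fun c hc _ => hcyc ⟨c, hc⟩
      have hS := star_of_no_small_cycle hy hz (fun hq => hne hq.symm) hno
      obtain ⟨v, c, hc⟩ := h
      have h3 := hc.three_le_length
      have e01 : (Gamma R).Adj (c.getVert 0) (c.getVert 1) := c.adj_getVert_succ (by omega)
      have e12 : (Gamma R).Adj (c.getVert 1) (c.getVert 2) := c.adj_getVert_succ (by omega)
      have e23 : (Gamma R).Adj (c.getVert 2) (c.getVert 3) := c.adj_getVert_succ (by omega)
      rcases hS _ _ e01 with h0 | h1
      · rcases hS _ _ e12 with h1' | h2'
        · exact e01.ne (h0.trans h1'.symm)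
        · have hne02 : c.getVert 2 ≠ c.getVert c.length :=
            hc.getVert_ne' (i := 2) (j := c.length) (by omega) (by omega) le_rfl
          exact hne02 ((h2'.trans h0.symm).trans
            (by rw [c.getVert_zero, c.getVert_length]))
      · rcases hS _ _ e23 with h2 | h3'
        · exact e12.ne (h1.trans h2.symm)
        · rcases (by omega : c.length = 3 ∨ 4 ≤ c.length) with hl | hl
          · have : c.getVert 3 = c.getVert 0 := by
              rw [← hl, c.getVert_length, c.getVert_zero]
            have hne13 : c.getVert 1 ≠ c.getVert 3 :=
              hc.getVert_ne' (by omega) (by omega) (by omega)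
            exact hne13 (h1.trans h3'.symm)
          · have hne13 : c.getVert 1 ≠ c.getVert 3 :=
              hc.getVert_ne' (by omega) (by omega) (by omega)
            exact hne13 (h1.trans h3'.symm)
end

section
/- Let R be a commutative ring with identity. The map x ↦ Rx induces a surjective graph homomorphism φ : Γ(R) → Γ_r(R), and there exists a graph homomorphism s : Γ_r(R) → Γ(R) with φ ∘ s equal to the identity on Γ_r(R); that is, Γ_r(R) is a retract of Γ(R). -/
universe u

/-- Proposition 4.2(1): the map `x ↦ Rx` induces a surjective graph homomorphism
`φ : Γ(R) → Γ_r(R)` admitting a section `s` with `φ ∘ s = id`; i.e. `Γ_r(R)` is a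
retract of `Γ(R)`. -/
theorem gammaR_is_retract_of_gamma (R : Type*) [CommRing R] :
    ∃ (φ : Gamma R →g GammaR R) (s : GammaR R →g Gamma R),
      (∀ v : GammaVert R, (φ v).1 = Ideal.span {v.1}) ∧
      Function.Surjective φ ∧
      ∀ w : GammaRVert R, φ (s w) = w := by
  classical
  have key : ∀ v : GammaVert R, Ideal.span {v.1} ≠ ⊤ := by
    intro v hv
    exact v.2.1 (Ideal.span_singleton_eq_top.mp hv)
  let φ : Gamma R →g GammaR R :=
    { toFun := fun v => ⟨Ideal.span {v.1}, v.1, v.2.1, v.2.2, rfl⟩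
      map_rel' := by
        rintro a b ⟨hne, htop⟩
        refine ⟨?_, htop⟩
        intro h
        have h' : Ideal.span {a.1} = Ideal.span {b.1} := congrArg Subtype.val h
        rw [h', sup_idem] at htop
        exact key b htop }
  let sf : GammaRVert R → GammaVert R := fun w =>
    ⟨Classical.choose w.2, (Classical.choose_spec w.2).1, (Classical.choose_spec w.2).2.1⟩
  have hsf : ∀ w : GammaRVert R, Ideal.span {(sf w).1} = w.1 := fun w =>
    ((Classical.choose_spec w.2).2.2).symm
  let s : GammaR R →g Gamma R :=
    { toFun := sf
      map_rel' := by
        rintro a b ⟨hne, htop⟩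
        refine ⟨?_, by rw [hsf a, hsf b]; exact htop⟩
        intro h
        apply hne
        apply Subtype.ext
        rw [← hsf a, ← hsf b, h]  }
  refine ⟨φ, s, fun v => rfl, ?_, ?_⟩
  · intro w
    exact ⟨sf w, Subtype.ext (hsf w)⟩
  · intro w
    exact Subtype.ext (hsf w)
end

section
/- Let R be a commutative ring with identity and let I be an ideal of R contained in the Jacobson radical J(R). Then the quotient map x ↦ x + I induces a graph homomorphism π : Γ(R) → Γ(R/I), and there exists a graph homomorphism s : Γ(R/I) → Γ(R) with π ∘ s equal to the identity on Γ(R/I); that is, Γ(R/I) is a retract of Γ(R). -/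
universe u

section Aux

variable {R : Type*} [CommRing R] {I : Ideal R}

lemma aux_unit_of_mk_unit (hI : I ≤ (⊥ : Ideal R).jacobson) {x : R}
    (h : IsUnit (Ideal.Quotient.mk I x)) : IsUnit x := by
  obtain ⟨u, hu⟩ := h
  obtain ⟨y, hy⟩ := Ideal.Quotient.mk_surjective (↑u⁻¹ : R ⧸ I)
  have h1 : Ideal.Quotient.mk I x * Ideal.Quotient.mk I y = 1 := by
    rw [hy, ← hu]; exact u.mul_inv
  have hmem : x * y - 1 ∈ I := by
    rw [← Ideal.Quotient.eq_zero_iff_mem, map_sub, map_mul, map_one, h1, sub_self]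
  have hu : IsUnit (x * y) := by
    have := (Ideal.mem_jacobson_bot).mp (hI hmem) 1
    simpa using this
  exact isUnit_of_mul_isUnit_left hu

lemma aux_mk_jacobson (hI : I ≤ (⊥ : Ideal R).jacobson) {x : R} :
    Ideal.Quotient.mk I x ∈ (⊥ : Ideal (R ⧸ I)).jacobson ↔ x ∈ (⊥ : Ideal R).jacobson := by
  simp only [Ideal.mem_jacobson_bot]
  constructor
  · intro h y
    have := h (Ideal.Quotient.mk I y)
    rw [← map_mul, ← map_one (Ideal.Quotient.mk I), ← map_add] at this
    exact aux_unit_of_mk_unit hI this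
  · intro h z
    obtain ⟨y, rfl⟩ := Ideal.Quotient.mk_surjective z
    have := (h y).map (Ideal.Quotient.mk I)
    simpa using this

lemma aux_eq_top (hI : I ≤ (⊥ : Ideal R).jacobson) {K : Ideal R}
    (h : K ⊔ I = ⊤) : K = ⊤ := by
  by_contra hK
  obtain ⟨m, hm, hKm⟩ := Ideal.exists_le_maximal K hK
  have hjm : (⊥ : Ideal R).jacobson ≤ m := sInf_le ⟨bot_le, hm⟩
  have : K ⊔ I ≤ m := sup_le hKm (hI.trans hjm)
  rw [h] at this
  exact hm.ne_top (top_le_iff.mp this)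

end Aux

/-- Proposition 4.2(2): for an ideal `I ⊆ J(R)`, the quotient map `x ↦ x + I` induces
a graph homomorphism `π : Γ(R) → Γ(R/I)` admitting a section `s` with `π ∘ s = id`;
i.e. `Γ(R/I)` is a retract of `Γ(R)`. -/
theorem gamma_quotient_is_retract (R : Type*) [CommRing R] (I : Ideal R)
    (hI : I ≤ (⊥ : Ideal R).jacobson) :
    ∃ (π : Gamma R →g Gamma (R ⧸ I)) (s : Gamma (R ⧸ I) →g Gamma R),
      (∀ v : GammaVert R, (π v).1 = Ideal.Quotient.mk I v.1) ∧
      ∀ w : GammaVert (R ⧸ I), π (s w) = w := by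
  classical
  let mk := Ideal.Quotient.mk I
  -- the projection
  refine ⟨⟨fun v => ⟨mk v.1, fun h => v.2.1 (aux_unit_of_mk_unit hI h),
      fun h => v.2.2 ((aux_mk_jacobson hI).mp h)⟩, ?_⟩, ?_⟩
  · rintro ⟨x, hx⟩ ⟨y, hy⟩ ⟨hne, hsup⟩
    have htop : Ideal.span {mk x} ⊔ Ideal.span {mk y} = ⊤ := by
      have := congrArg (Ideal.map mk) hsup
      rwa [Ideal.map_sup, Ideal.map_span, Ideal.map_span, Set.image_singleton,
        Set.image_singleton, Ideal.map_top] at this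
    refine ⟨fun h => ?_, htop⟩
    have hxy : mk x = mk y := congrArg Subtype.val h
    rw [← hxy, sup_idem, Ideal.span_singleton_eq_top] at htop
    exact (fun hh => hx.1 (aux_unit_of_mk_unit hI hh)) htop
  -- the section
  · have pick : ∀ w : GammaVert (R ⧸ I), ∃ x : R, mk x = w.1 :=
      fun w => Ideal.Quotient.mk_surjective w.1
    choose f hf using pick
    refine ⟨⟨fun w => ⟨f w, fun h => w.2.1 (hf w ▸ h.map mk),
        fun h => w.2.2 (hf w ▸ (aux_mk_jacobson hI).mpr h)⟩, ?_⟩, fun v => rfl, ?_⟩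
    · rintro w w' ⟨hne, hsup⟩
      have hfne : f w ≠ f w' := by
        intro h
        exact hne (Subtype.ext (by rw [← hf w, ← hf w', h]))
      refine ⟨fun h => hfne (congrArg Subtype.val h), ?_⟩
      set K : Ideal R := Ideal.span {f w} ⊔ Ideal.span {f w'} with hK
      have hmap : Ideal.map mk K = ⊤ := by
        rw [hK, Ideal.map_sup, Ideal.map_span, Ideal.map_span, Set.image_singleton,
          Set.image_singleton, hf w, hf w']
        exact hsup
      have hc := Ideal.comap_map_of_surjective mk Ideal.Quotient.mk_surjective K
      rw [hmap, Ideal.comap_top] at hc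
      have hker : RingHom.ker mk = I := Ideal.mk_ker
      have : K ⊔ I = ⊤ := by
        rw [← hker]
        exact hc.symm
      exact aux_eq_top hI this
    · intro w
      exact Subtype.ext (hf w)
end

section
/- Let R be a commutative ring with identity that is not a local ring and which has only finitely many maximal ideals, say n of them (so n ≥ 2). Then the chromatic number of Γ(R), the clique number of Γ(R), the chromatic number of Γ_r(R), and the clique number of Γ_r(R) are all equal to n. -/
universe u

open Ideal in
lemma exists_avoid_max {R : Type*} [CommRing R] (hfin : {I : Ideal R | I.IsMaximal}.Finite)
    {M : Ideal R} (hM : M.IsMaximal) :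
    ∃ x, x ∈ M ∧ ∀ M' : Ideal R, M'.IsMaximal → M' ≠ M → x ∉ M' := by
  classical
  set t := hfin.toFinset.erase M with ht
  have hsub : ¬ ((M : Set R) ⊆ ⋃ i ∈ (↑t : Set (Ideal R)), (i : Set R)) := by
    intro hs
    rw [Ideal.subset_union_prime M M (fun i hi _ _ =>
      (hfin.mem_toFinset.mp (Finset.mem_of_mem_erase hi)).isPrime)] at hs
    obtain ⟨i, hit, hle⟩ := hs
    obtain ⟨hne, hmem⟩ := Finset.mem_erase.mp hit
    exact hne (hM.eq_of_le (hfin.mem_toFinset.mp hmem).ne_top hle).symm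
  rw [Set.not_subset] at hsub
  obtain ⟨x, hxM, hx⟩ := hsub
  simp only [Set.mem_iUnion, not_exists, SetLike.mem_coe] at hx
  refine ⟨x, hxM, fun M' hM' hne hmem => ?_⟩
  exact hx M' (by simp [ht, Finset.mem_erase, hne, hfin.mem_toFinset, hM']) hmem

/-- Theorem 4.5: for a non-local commutative ring `R` with exactly `n` maximal ideals,
the chromatic numbers and clique numbers of `Γ(R)` and `Γ_r(R)` all equal `n`. -/
theorem gamma_chromatic_eq_card_max (R : Type*) [CommRing R] [Nontrivial R]
    (h : ¬IsLocalRing R) (n : ℕ)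
    (hfin : {I : Ideal R | I.IsMaximal}.Finite)
    (hn : {I : Ideal R | I.IsMaximal}.ncard = n) :
    (Gamma R).chromaticNumber = (n : ℕ∞) ∧
    (Gamma R).cliqueNum = n ∧
    (GammaR R).chromaticNumber = (n : ℕ∞) ∧
    (GammaR R).cliqueNum = n := by
  classical
  set T : Finset (Ideal R) := hfin.toFinset with hT
  have hTmem : ∀ {M : Ideal R}, M ∈ T ↔ M.IsMaximal := fun {M} => hfin.mem_toFinset
  have hTcard : T.card = n := by rw [← hn, Set.ncard_eq_toFinset_card _ hfin]
  -- every element of R not a unit lies in some maximal ideal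
  have hex : ∀ x : R, ¬IsUnit x → ∃ M : Ideal R, M.IsMaximal ∧ x ∈ M := by
    intro x hx
    obtain ⟨M, hM, hle⟩ := Ideal.exists_le_maximal (Ideal.span {x})
      (fun hc => hx (Ideal.span_singleton_eq_top.mp hc))
    exact ⟨M, hM, hle (Ideal.mem_span_singleton_self x)⟩
  -- there exists a second maximal ideal
  have hsecond : ∀ M : Ideal R, M.IsMaximal → ∃ M', M'.IsMaximal ∧ M' ≠ M := by
    intro M hM
    by_contra hc
    push_neg at hc
    exact h (IsLocalRing.of_unique_max_ideal ⟨M, hM, fun I hI => hc I hI⟩)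
  -- the coloring maps
  have hcolG : ∀ v : GammaVert R, ∃ M : Ideal R, M.IsMaximal ∧ v.1 ∈ M :=
    fun v => hex v.1 v.2.1
  let F : GammaVert R → Ideal R := fun v => (hcolG v).choose
  have hF1 : ∀ v, (F v).IsMaximal := fun v => (hcolG v).choose_spec.1
  have hF2 : ∀ v, v.1 ∈ F v := fun v => (hcolG v).choose_spec.2
  have hFadj : ∀ v w : GammaVert R, (Gamma R).Adj v w → F v ≠ F w := by
    intro v w hadj heq
    obtain ⟨hne, htop⟩ := hadj
    apply (hF1 v).ne_top
    rw [eq_top_iff, ← htop]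
    exact sup_le ((Ideal.span_singleton_le_iff_mem _).mpr (hF2 v))
      ((Ideal.span_singleton_le_iff_mem _).mpr (heq ▸ hF2 w))
  have hcolGR : ∀ v : GammaRVert R, ∃ M : Ideal R, M.IsMaximal ∧ v.1 ≤ M := by
    intro v
    obtain ⟨x, hxu, _, hxsp⟩ := v.2
    obtain ⟨M, hM, hxM⟩ := hex x hxu
    exact ⟨M, hM, hxsp ▸ (Ideal.span_singleton_le_iff_mem _).mpr hxM⟩
  let FR : GammaRVert R → Ideal R := fun v => (hcolGR v).choose
  have hFR1 : ∀ v, (FR v).IsMaximal := fun v => (hcolGR v).choose_spec.1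
  have hFR2 : ∀ v, v.1 ≤ FR v := fun v => (hcolGR v).choose_spec.2
  have hFRadj : ∀ v w : GammaRVert R, (GammaR R).Adj v w → FR v ≠ FR w := by
    intro v w hadj heq
    obtain ⟨hne, htop⟩ := hadj
    apply (hFR1 v).ne_top
    rw [eq_top_iff, ← htop]
    exact sup_le (hFR2 v) (heq ▸ hFR2 w)
  -- colorability
  have hcardT : Fintype.card {M // M ∈ T} = n := by rw [Fintype.card_coe]; exact hTcard
  have hcolorG : (Gamma R).Colorable n := by
    rw [← hcardT]
    exact (SimpleGraph.Coloring.mk (fun v => (⟨F v, hTmem.mpr (hF1 v)⟩ : {M // M ∈ T}))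
      (fun {v w} hadj hc => hFadj v w hadj (congrArg Subtype.val hc))).colorable
  have hcolorGR : (GammaR R).Colorable n := by
    rw [← hcardT]
    exact (SimpleGraph.Coloring.mk (fun v => (⟨FR v, hTmem.mpr (hFR1 v)⟩ : {M // M ∈ T}))
      (fun {v w} hadj hc => hFRadj v w hadj (congrArg Subtype.val hc))).colorable
  -- clique size bounds
  have hboundG : ∀ (m : ℕ) (s : Finset (GammaVert R)), (Gamma R).IsNClique m s → m ≤ n := by
    intro m s hs
    rw [← hs.card_eq, ← hTcard]
    refine Finset.card_le_card_of_injOn F (fun v _ => hTmem.mpr (hF1 v)) ?_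
    intro v hv w hw heq
    by_contra hne
    exact hFadj v w (hs.isClique hv hw hne) heq
  have hboundGR : ∀ (m : ℕ) (s : Finset (GammaRVert R)), (GammaR R).IsNClique m s → m ≤ n := by
    intro m s hs
    rw [← hs.card_eq, ← hTcard]
    refine Finset.card_le_card_of_injOn FR (fun v _ => hTmem.mpr (hFR1 v)) ?_
    intro v hv w hw heq
    by_contra hne
    exact hFRadj v w (hs.isClique hv hw hne) heq
  -- the avoiding elements
  let g : {M // M ∈ T} → R := fun M => (exists_avoid_max hfin (hTmem.mp M.2)).choose
  have hg1 : ∀ M, g M ∈ M.1 := fun M => (exists_avoid_max hfin (hTmem.mp M.2)).choose_spec.1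
  have hg2 : ∀ M, ∀ M' : Ideal R, M'.IsMaximal → M' ≠ M.1 → g M ∉ M' :=
    fun M => (exists_avoid_max hfin (hTmem.mp M.2)).choose_spec.2
  have hgu : ∀ M, ¬IsUnit (g M) := by
    intro M hu
    exact (hTmem.mp M.2).ne_top (Ideal.eq_top_of_isUnit_mem _ (hg1 M) hu)
  have hgj : ∀ M, g M ∉ (⊥ : Ideal R).jacobson := by
    intro M hj
    obtain ⟨M', hM', hne⟩ := hsecond M.1 (hTmem.mp M.2)
    exact hg2 M M' hM' hne (Submodule.mem_sInf.mp hj M' ⟨bot_le, hM'⟩)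
  have hgne : ∀ M M' : {M // M ∈ T}, M ≠ M' → g M ≠ g M' := by
    intro M M' hne heq
    have hvne : M'.1 ≠ M.1 := fun hc => hne (Subtype.ext hc.symm)
    exact hg2 M M'.1 (hTmem.mp M'.2) hvne (heq ▸ hg1 M')
  have hgtop : ∀ M M' : {M // M ∈ T}, M ≠ M' →
      Ideal.span {g M} ⊔ Ideal.span {g M'} = ⊤ := by
    intro M M' hne
    by_contra hc
    obtain ⟨N, hN, hle⟩ := Ideal.exists_le_maximal _ hc
    have h1 : g M ∈ N := hle (le_sup_left (α := Ideal R) (Ideal.mem_span_singleton_self _))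
    have h2 : g M' ∈ N := hle (le_sup_right (α := Ideal R) (Ideal.mem_span_singleton_self _))
    have e1 : N = M.1 := by
      by_contra hc1; exact hg2 M N hN hc1 h1
    have e2 : N = M'.1 := by
      by_contra hc2; exact hg2 M' N hN hc2 h2
    exact hne (Subtype.ext (e1 ▸ e2))
  -- clique in Gamma
  let vG : {M // M ∈ T} → GammaVert R := fun M => ⟨g M, hgu M, hgj M⟩
  have hvGinj : Function.Injective vG := by
    intro M M' heq
    by_contra hne
    exact hgne M M' hne (congrArg Subtype.val heq)
  have hcliqueG : (Gamma R).IsNClique n (Finset.univ.image vG) := by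
    constructor
    · intro a ha b hb hne
      simp only [Finset.coe_image, Set.mem_image] at ha hb
      obtain ⟨M, _, rfl⟩ := ha
      obtain ⟨M', _, rfl⟩ := hb
      have hMM : M ≠ M' := fun hc => hne (by rw [hc])
      exact ⟨hne, hgtop M M' hMM⟩
    · rw [Finset.card_image_of_injective _ hvGinj, Finset.card_univ, hcardT]
  -- clique in GammaR
  have hsptop : ∀ M M' : {M // M ∈ T}, M ≠ M' →
      Ideal.span {g M} ≠ Ideal.span {g M'} := by
    intro M M' hne heq
    have := hgtop M M' hne
    rw [heq, sup_idem] at this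
    exact hgu M' (Ideal.span_singleton_eq_top.mp this)
  let vGR : {M // M ∈ T} → GammaRVert R :=
    fun M => ⟨Ideal.span {g M}, g M, hgu M, hgj M, rfl⟩
  have hvGRinj : Function.Injective vGR := by
    intro M M' heq
    by_contra hne
    exact hsptop M M' hne (congrArg Subtype.val heq)
  have hcliqueGR : (GammaR R).IsNClique n (Finset.univ.image vGR) := by
    constructor
    · intro a ha b hb hne
      simp only [Finset.coe_image, Set.mem_image] at ha hb
      obtain ⟨M, _, rfl⟩ := ha
      obtain ⟨M', _, rfl⟩ := hb
      have hMM : M ≠ M' := fun hc => hne (by rw [hc])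
      exact ⟨hne, hgtop M M' hMM⟩
    · rw [Finset.card_image_of_injective _ hvGRinj, Finset.card_univ, hcardT]
  -- assemble
  refine ⟨?_, ?_, ?_, ?_⟩
  · refine le_antisymm hcolorG.chromaticNumber_le ?_
    have := hcliqueG.isClique.card_le_chromaticNumber
    rwa [hcliqueG.card_eq] at this
  · refine le_antisymm (csSup_le ⟨0, ∅, SimpleGraph.isNClique_empty.mpr rfl⟩
      (fun m ⟨s, hs⟩ => hboundG m s hs)) ?_
    exact le_csSup ⟨n, fun m ⟨s, hs⟩ => hboundG m s hs⟩ ⟨_, hcliqueG⟩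
  · refine le_antisymm hcolorGR.chromaticNumber_le ?_
    have := hcliqueGR.isClique.card_le_chromaticNumber
    rwa [hcliqueGR.card_eq] at this
  · refine le_antisymm (csSup_le ⟨0, ∅, SimpleGraph.isNClique_empty.mpr rfl⟩
      (fun m ⟨s, hs⟩ => hboundGR m s hs)) ?_
    exact le_csSup ⟨n, fun m ⟨s, hs⟩ => hboundGR m s hs⟩ ⟨_, hcliqueGR⟩
end
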